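/- arXiv:1405.5296 — 11 statements merged into one kernel-verified Lean document; each statement's English description precedes it below -/
import Mathlib

section
/- The function u(x,t) = (1 - 2tx - (1-4tx)^{1/2})/(2t^2) solves the inviscid Burgers equation ∂_t u = ∂_x(u^2/2) with initial condition u(x,0) = x^2, and its power series expansion is u(x,t) = Σ_{n≥0} ((2n+2)!/((n+1)!(n+2)!)) t^n x^{n+2}, whose coefficients are the Catalan numbers. -/
open Finset

private lemma myCatalan_le_four_pow (n : ℕ) : catalan n ≤ 4 ^ n := by
  have h1 : catalan n ≤ n.centralBinom := by
    rw [catalan_eq_centralBinom_div]; exact Nat.div_le_self _ _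
  refine h1.trans ?_
  have h2 : n.centralBinom ≤ ∑ i ∈ range (2 * n + 1), (2 * n).choose i :=
    Finset.single_le_sum (f := fun i => (2 * n).choose i) (fun i _ => Nat.zero_le _) (Finset.mem_range.2 (by omega))
  calc n.centralBinom ≤ ∑ i ∈ range (2 * n + 1), (2 * n).choose i := h2
    _ = 2 ^ (2 * n) := Nat.sum_range_choose _
    _ = 4 ^ n := by rw [pow_mul]; norm_num

private lemma myCat_summable_norm {z : ℝ} (hz : |z| < 1/4) :
    Summable (fun n => ‖(catalan n : ℝ) * z ^ n‖) := by
  have h4 : 4 * |z| < 1 := by linarith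
  refine Summable.of_nonneg_of_le (fun n => norm_nonneg _) (fun n => ?_)
    (summable_geometric_of_lt_one (by positivity) h4)
  have : ‖(catalan n : ℝ) * z ^ n‖ = (catalan n : ℝ) * |z| ^ n := by
    rw [norm_mul, norm_pow]
    simp [Real.norm_natCast, Real.norm_eq_abs]
  rw [this, mul_pow]
  exact mul_le_mul_of_nonneg_right (by exact_mod_cast myCatalan_le_four_pow n)
    (pow_nonneg (abs_nonneg z) n)

private lemma myCat_summable {z : ℝ} (hz : |z| < 1/4) :
    Summable (fun n => (catalan n : ℝ) * z ^ n) :=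
  (myCat_summable_norm hz).of_norm

noncomputable def myG (z : ℝ) : ℝ := ∑' n, (catalan n : ℝ) * z ^ n

private lemma myG_sq {z : ℝ} (hz : |z| < 1/4) :
    myG z ^ 2 = ∑' n, (catalan (n + 1) : ℝ) * z ^ n := by
  rw [myG, sq,
    tsum_mul_tsum_eq_tsum_sum_antidiagonal_of_summable_norm (myCat_summable_norm hz)
      (myCat_summable_norm hz)]
  refine tsum_congr fun n => ?_
  rw [catalan_succ']
  push_cast
  rw [Finset.sum_mul]
  refine Finset.sum_congr rfl fun kl hkl => ?_
  have h := Finset.HasAntidiagonal.mem_antidiagonal.1 hkl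
  rw [← h, pow_add]; ring

private lemma myG_eq {z : ℝ} (hz : |z| < 1/4) : myG z = 1 + z * myG z ^ 2 := by
  rw [myG_sq hz]
  have h0 := Summable.tsum_eq_zero_add (f := fun n => (catalan n : ℝ) * z ^ n) (myCat_summable hz)
  have h1 : ∀ n : ℕ, (catalan (n + 1) : ℝ) * z ^ (n + 1)
      = z * ((catalan (n + 1) : ℝ) * z ^ n) := fun n => by ring
  rw [tsum_congr h1, tsum_mul_left] at h0
  simpa [myG] using h0

private lemma myG_sq_eq {z : ℝ} (hz : |z| < 1/4) : (1 - 2 * z * myG z) ^ 2 = 1 - 4 * z := by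
  have hg := myG_eq hz
  linear_combination (-4 * z) * hg

private lemma myG_zero : myG 0 = 1 := by
  rw [myG]
  rw [tsum_eq_single 0 (fun n hn => by simp [zero_pow hn])]
  simp

private lemma myG_pos {z : ℝ} (hz : |z| < 1/4) : 0 < 1 - 2 * z * myG z := by
  set r := |z| with hr
  have hr0 : 0 ≤ r := abs_nonneg z
  have hr4 : r < 1/4 := hz
  set s : Set ℝ := Set.Icc (-r) r with hs
  have hmem : ∀ y ∈ s, |y| < 1/4 := fun y hy => by
    rw [abs_lt]; constructor <;> [linarith [hy.1]; linarith [hy.2]]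
  have hcG : ContinuousOn myG s := by
    refine continuousOn_tsum (u := fun n => (4 * r) ^ n)
      (fun i => (by fun_prop : Continuous fun y : ℝ => (catalan i : ℝ) * y ^ i).continuousOn)
      (summable_geometric_of_lt_one (by positivity) (by linarith)) fun n y hy => ?_
    have hyr : |y| ≤ r := abs_le.2 ⟨hy.1, hy.2⟩
    have : ‖(catalan n : ℝ) * y ^ n‖ = (catalan n : ℝ) * |y| ^ n := by
      rw [norm_mul, norm_pow]; simp [Real.norm_eq_abs]
    rw [this]
    show (catalan n : ℝ) * |y| ^ n ≤ (4 * r) ^ n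
    have h1 : (catalan n : ℝ) ≤ 4 ^ n := by exact_mod_cast myCatalan_le_four_pow n
    have h2 : |y| ^ n ≤ r ^ n := pow_le_pow_left₀ (abs_nonneg y) hyr n
    calc (catalan n : ℝ) * |y| ^ n ≤ 4 ^ n * r ^ n := by
          exact mul_le_mul h1 h2 (by positivity) (by positivity)
      _ = (4 * r) ^ n := (mul_pow _ _ _).symm
  have hcF : ContinuousOn (fun y => 1 - 2 * y * myG y) s := by
    exact continuousOn_const.sub ((continuousOn_const.mul continuousOn_id).mul hcG)
  have hne : ∀ y ∈ s, 1 - 2 * y * myG y ≠ 0 := by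
    intro y hy h0
    have h1 := myG_sq_eq (hmem y hy)
    rw [h0] at h1
    have : (0:ℝ) < 1 - 4 * y := by have := (hmem y hy); rw [abs_lt] at this; linarith [this.2]
    simp at h1; linarith
  have hF0 : 1 - 2 * (0:ℝ) * myG 0 = 1 := by simp
  have hzs : z ∈ s := ⟨neg_abs_le z, le_abs_self z⟩
  have h0s : (0:ℝ) ∈ s := ⟨by linarith, hr0⟩
  by_contra hcon
  push_neg at hcon
  have hlt : 1 - 2 * z * myG z < 0 :=
    lt_of_le_of_ne hcon (hne z hzs)
  rcases le_or_gt z 0 with hz0 | hz0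
  · have hsub : Set.Icc z 0 ⊆ s := Set.Icc_subset_Icc (by rw [hr]; cases abs_cases z <;> linarith) hr0
    have := intermediate_value_Icc hz0 (hcF.mono hsub)
    have h0mem : (0:ℝ) ∈ Set.Icc (1 - 2 * z * myG z) (1 - 2 * (0:ℝ) * myG 0) := by
      rw [hF0]; exact ⟨hlt.le, zero_le_one⟩
    obtain ⟨c, hc, hc0⟩ := this h0mem
    exact hne c (hsub hc) hc0
  · have hsub : Set.Icc 0 z ⊆ s := Set.Icc_subset_Icc (by linarith) (le_abs_self z)
    have := intermediate_value_Icc' hz0.le (hcF.mono hsub)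
    have h0mem : (0:ℝ) ∈ Set.Icc (1 - 2 * z * myG z) (1 - 2 * (0:ℝ) * myG 0) := by
      rw [hF0]; exact ⟨hlt.le, zero_le_one⟩
    obtain ⟨c, hc, hc0⟩ := this h0mem
    exact hne c (hsub hc) hc0

private lemma mySqrt_eq {z : ℝ} (hz : |z| < 1/4) :
    Real.sqrt (1 - 4 * z) = 1 - 2 * z * myG z := by
  rw [← myG_sq_eq hz, Real.sqrt_sq (myG_pos hz).le]

private lemma myFact_eq (n : ℕ) :
    Nat.factorial (2 * n + 2)
      = catalan (n + 1) * (Nat.factorial (n + 1) * Nat.factorial (n + 2)) := by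
  have h1 := succ_mul_catalan_eq_centralBinom (n + 1)
  have h2 := Nat.choose_mul_factorial_mul_factorial (show n + 1 ≤ 2 * n + 2 by omega)
  have h3 : Nat.centralBinom (n + 1) = (2 * n + 2).choose (n + 1) := by
    rw [Nat.centralBinom_eq_two_mul_choose, show 2 * (n + 1) = 2 * n + 2 from by omega]
  have h4 : 2 * n + 2 - (n + 1) = n + 1 := by omega
  rw [h4] at h2
  calc Nat.factorial (2 * n + 2)
      = (2 * n + 2).choose (n + 1) * Nat.factorial (n + 1) * Nat.factorial (n + 1) := h2.symm
    _ = ((n + 2) * catalan (n + 1)) * Nat.factorial (n + 1) * Nat.factorial (n + 1) := by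
        rw [← h3, ← h1]
    _ = catalan (n + 1) * (Nat.factorial (n + 1) * ((n + 2) * Nat.factorial (n + 1))) := by ring
    _ = catalan (n + 1) * (Nat.factorial (n + 1) * Nat.factorial (n + 2)) := by
        rw [← Nat.factorial_succ]

private lemma myCoeff (K : Type*) [Field K] [CharZero K] (n : ℕ) :
    ((Nat.factorial (2 * n + 2) : K)) /
      ((Nat.factorial (n + 1) : K) * (Nat.factorial (n + 2) : K)) = catalan (n + 1) := by
  rw [myFact_eq n]
  push_cast
  rw [mul_div_assoc, div_self, mul_one]
  exact mul_ne_zero (by exact_mod_cast (Nat.factorial_pos (n+1)).ne')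
    (by exact_mod_cast (Nat.factorial_pos (n+2)).ne')

open Filter in
/-- `u(x,t) = (1 - 2tx - √(1-4tx))/(2t²)` solves the inviscid Burgers equation
`∂ₜ u = ∂ₓ (u²/2)` with initial condition `u(x,0) = x²` (taken as a limit `t → 0`),
and its power series expansion is `u = Σ_{n≥0} ((2n+2)!/((n+1)!(n+2)!)) tⁿ x^{n+2}`,
whose coefficients are the Catalan numbers `C_{n+1}`. -/
theorem burgers_solution_quadratic :
    let u : ℝ → ℝ → ℝ := fun x t => (1 - 2 * t * x - Real.sqrt (1 - 4 * t * x)) / (2 * t ^ 2)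
    (∀ x t : ℝ, t ≠ 0 → 4 * t * x < 1 →
      deriv (fun t' => u x t') t = deriv (fun x' => (u x' t) ^ 2 / 2) x) ∧
    (∀ x : ℝ, Filter.Tendsto (fun t => u x t) (nhdsWithin 0 {t | t ≠ 0}) (nhds (x ^ 2))) ∧
    (∀ x t : ℝ, t ≠ 0 → |4 * t * x| < 1 →
      u x t = ∑' n : ℕ,
        ((Nat.factorial (2 * n + 2) : ℝ) /
          ((Nat.factorial (n + 1) : ℝ) * (Nat.factorial (n + 2) : ℝ))) * t ^ n * x ^ (n + 2)) ∧
    (∀ n : ℕ, ((Nat.factorial (2 * n + 2) : ℚ) /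
        ((Nat.factorial (n + 1) : ℚ) * (Nat.factorial (n + 2) : ℚ))) = catalan (n + 1)) := by
  intro u
  refine ⟨?_, ?_, ?_, fun n => myCoeff ℚ n⟩
  · show ∀ x t : ℝ, t ≠ 0 → 4 * t * x < 1 →
        deriv (fun t' => (1 - 2 * t' * x - Real.sqrt (1 - 4 * t' * x)) / (2 * t' ^ 2)) t =
        deriv (fun x' => ((1 - 2 * t * x' - Real.sqrt (1 - 4 * t * x')) / (2 * t ^ 2)) ^ 2 / 2) x
    intro x t ht hlt
    have hpos : 0 < 1 - 4 * t * x := by linarith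
    have hs : Real.sqrt (1 - 4 * t * x) ^ 2 = 1 - 4 * t * x := Real.sq_sqrt hpos.le
    have hs0 : 0 < Real.sqrt (1 - 4 * t * x) := Real.sqrt_pos.2 hpos
    have ht2 : (2:ℝ) * t ^ 2 ≠ 0 := by positivity
    -- t-derivative
    have hin_t : HasDerivAt (fun t' : ℝ => 1 - 4 * t' * x) (-(4 * 1 * x)) t :=
      (((hasDerivAt_id t).const_mul 4).mul_const x).const_sub 1
    have hsq_t : HasDerivAt (fun t' : ℝ => Real.sqrt (1 - 4 * t' * x))
        (-(4 * 1 * x) / (2 * Real.sqrt (1 - 4 * t * x))) t := hin_t.sqrt hpos.ne'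
    have hnum_t : HasDerivAt (fun t' : ℝ => 1 - 2 * t' * x - Real.sqrt (1 - 4 * t' * x))
        (-(2 * 1 * x) - -(4 * 1 * x) / (2 * Real.sqrt (1 - 4 * t * x))) t :=
      ((((hasDerivAt_id t).const_mul 2).mul_const x).const_sub 1).sub hsq_t
    have hden_t : HasDerivAt (fun t' : ℝ => 2 * t' ^ 2) (2 * (↑2 * t ^ 1)) t :=
      (hasDerivAt_pow 2 t).const_mul 2
    have hL := HasDerivAt.deriv (f := fun t' : ℝ => (1 - 2 * t' * x - Real.sqrt (1 - 4 * t' * x)) / (2 * t' ^ 2)) (hnum_t.div hden_t ht2)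
    -- x-derivative
    have hin_x : HasDerivAt (fun x' : ℝ => 1 - 4 * t * x') (-(4 * t * 1)) x :=
      (((hasDerivAt_id x).const_mul (4 * t)).const_sub 1).congr_deriv (by ring)
    have hsq_x : HasDerivAt (fun x' : ℝ => Real.sqrt (1 - 4 * t * x'))
        (-(4 * t * 1) / (2 * Real.sqrt (1 - 4 * t * x))) x := hin_x.sqrt hpos.ne'
    have hnum_x : HasDerivAt (fun x' : ℝ => 1 - 2 * t * x' - Real.sqrt (1 - 4 * t * x'))
        (-(2 * t) - -(4 * t * 1) / (2 * Real.sqrt (1 - 4 * t * x))) x :=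
      ((((hasDerivAt_id x).const_mul (2 * t)).const_sub 1).congr_deriv (by ring)).sub hsq_x
    have hu_x : HasDerivAt (fun x' : ℝ => (1 - 2 * t * x' - Real.sqrt (1 - 4 * t * x')) / (2 * t ^ 2))
        ((-(2 * t) - -(4 * t * 1) / (2 * Real.sqrt (1 - 4 * t * x))) / (2 * t ^ 2)) x :=
      hnum_x.div_const _
    have hR := HasDerivAt.deriv (f := fun x' : ℝ => ((1 - 2 * t * x' - Real.sqrt (1 - 4 * t * x')) / (2 * t ^ 2)) ^ 2 / 2) ((hu_x.pow 2).div_const 2)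
    rw [hL, hR]
    set s := Real.sqrt (1 - 4 * t * x) with hsdef
    rw [show (2:ℕ) - 1 = 1 from rfl, pow_one]
    field_simp
    linear_combination 8 * hs
  · show ∀ x : ℝ, Filter.Tendsto
        (fun t : ℝ => (1 - 2 * t * x - Real.sqrt (1 - 4 * t * x)) / (2 * t ^ 2))
        (nhdsWithin 0 {t | t ≠ 0}) (nhds (x ^ 2))
    intro x
    have hc : Continuous fun t : ℝ => 1 - 2 * t * x + Real.sqrt (1 - 4 * t * x) := by
      have : Continuous fun t : ℝ => 1 - 4 * t * x := by fun_prop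
      exact (continuous_const.sub (by fun_prop)).add (Real.continuous_sqrt.comp this)
    have hden : Tendsto (fun t : ℝ => 1 - 2 * t * x + Real.sqrt (1 - 4 * t * x)) (nhds 0)
        (nhds 2) := by
      have h20 : (2:ℝ) = 1 - 2 * 0 * x + Real.sqrt (1 - 4 * 0 * x) := by norm_num
      rw [show nhds (2:ℝ) = nhds (1 - 2 * 0 * x + Real.sqrt (1 - 4 * 0 * x)) from by rw [← h20]]
      exact hc.tendsto 0
    have hmain : Tendsto (fun t : ℝ => 2 * x ^ 2 / (1 - 2 * t * x + Real.sqrt (1 - 4 * t * x)))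
        (nhds 0) (nhds (x ^ 2)) := by
      have h := (tendsto_const_nhds (x := 2 * x ^ 2) (f := nhds (0:ℝ))).div hden two_ne_zero
      simpa [Pi.div_def] using h
    refine Tendsto.congr' ?_ (hmain.mono_left nhdsWithin_le_nhds)
    have habs : ∀ᶠ t : ℝ in nhds 0, |4 * t * x| < 1 := by
      have hct : Tendsto (fun t : ℝ => |4 * t * x|) (nhds 0) (nhds 0) := by
        have : Continuous fun t : ℝ => |4 * t * x| := by fun_prop
        simpa using this.tendsto 0
      exact hct.eventually_lt_const one_pos
    filter_upwards [habs.filter_mono nhdsWithin_le_nhds, self_mem_nhdsWithin] with t h4 ht0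
    have ht0 : t ≠ 0 := ht0
    have hpos : 0 < 1 - 4 * t * x := by
      have := abs_lt.1 h4
      linarith [this.2]
    have h2 : (0:ℝ) < 1 - 2 * t * x := by
      have := abs_lt.1 h4
      have h24 : |2 * t * x| < 1 := by
        rw [abs_lt] at h4 ⊢
        constructor <;> nlinarith [h4.1, h4.2]
      have := abs_lt.1 h24
      linarith [this.2]
    have hs : Real.sqrt (1 - 4 * t * x) ^ 2 = 1 - 4 * t * x := Real.sq_sqrt hpos.le
    have hsnn : 0 ≤ Real.sqrt (1 - 4 * t * x) := Real.sqrt_nonneg _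
    have hdne : 1 - 2 * t * x + Real.sqrt (1 - 4 * t * x) ≠ 0 := by positivity
    rw [div_eq_div_iff hdne (by positivity)]
    linear_combination hs
  · show ∀ x t : ℝ, t ≠ 0 → |4 * t * x| < 1 →
        (1 - 2 * t * x - Real.sqrt (1 - 4 * t * x)) / (2 * t ^ 2) = ∑' n : ℕ,
          ((Nat.factorial (2 * n + 2) : ℝ) /
            ((Nat.factorial (n + 1) : ℝ) * (Nat.factorial (n + 2) : ℝ))) * t ^ n * x ^ (n + 2)
    intro x t ht hx4
    have hz : |t * x| < 1/4 := by
      rw [show (4:ℝ) * t * x = 4 * (t * x) by ring, abs_mul] at hx4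
      rw [show |(4:ℝ)| = 4 by norm_num] at hx4
      linarith
    have hterm : ∀ n : ℕ,
        ((Nat.factorial (2 * n + 2) : ℝ) /
          ((Nat.factorial (n + 1) : ℝ) * (Nat.factorial (n + 2) : ℝ))) * t ^ n * x ^ (n + 2)
        = x ^ 2 * ((catalan (n + 1) : ℝ) * (t * x) ^ n) := by
      intro n
      rw [myCoeff ℝ n]
      ring
    rw [tsum_congr hterm, tsum_mul_left, ← myG_sq hz]
    rw [show (1:ℝ) - 4 * t * x = 1 - 4 * (t * x) by ring, mySqrt_eq hz]
    have hg := myG_eq hz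
    field_simp
    linear_combination (2 * t * x) * hg
end

section
/- For every integer m ≥ 1 and constant c, the formal power series u(x,t) = x^m Σ_{k≥1} (c^k/((m-1)k+1)) · binom(mk,k) · (x^{m-1} t)^{k-1} satisfies the inviscid Burgers equation ∂_t u = ∂_x(u^2/2) with initial condition u(x,0) = c x^m. -/
open Finset

namespace BurgersAux

/-- Fuss–Catalan numbers (as rationals), multiplier `m = p+1`. -/
noncomputable def A (p k : ℕ) : ℚ := (Nat.choose ((p+1)*k) k : ℚ) / (p*k+1)

lemma A_zero (p : ℕ) : A p 0 = 1 := by simp [A]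

lemma pk_ne (p k : ℕ) : ((p:ℚ)*k+1) ≠ 0 := by positivity

/-- cast of choose_succ_right_eq at `(N*(p+1), N-1)` style:
`C(M, n+1)*(n+1) = C(M, n)*(p*(n+1)+1)` with `M = (n+1)*(p+1)`. -/
lemma h_ratio (p n : ℕ) :
    (Nat.choose ((n+1)*(p+1)) (n+1) : ℚ) * (n+1)
      = (Nat.choose ((n+1)*(p+1)) n : ℚ) * (p*(n+1)+1) := by
  have h := Nat.choose_succ_right_eq ((n+1)*(p+1)) n
  have e : (n+1)*(p+1) - n = p*(n+1)+1 := by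
    have : (n+1)*(p+1) = p*(n+1) + (n+1) := by ring
    omega
  rw [e] at h
  exact_mod_cast congrArg (Nat.cast : ℕ → ℚ) h

/-- `C((j+1)*(p+1), j+1) = (p+1) * C(p + j*(p+1), j)` in ℚ. -/
lemma T1 (p j : ℕ) :
    (Nat.choose ((j+1)*(p+1)) (j+1) : ℚ) = (p+1) * Nat.choose (p + j*(p+1)) j := by
  have h := Nat.add_one_mul_choose_eq (p + j*(p+1)) j
  have e : p + j*(p+1) + 1 = (j+1)*(p+1) := by ring
  rw [e] at h
  have h' : ((j+1)*(p+1) : ℚ) * Nat.choose (p + j*(p+1)) j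
      = (Nat.choose ((j+1)*(p+1)) (j+1) : ℚ) * (j+1) := by exact_mod_cast h
  have hj : ((j:ℚ)+1) ≠ 0 := by positivity
  field_simp at h' ⊢
  nlinarith [h']

/-- base identity: `A p (n+1) + (p+1)*C((n+1)*(p+1), n) = C((n+1)*(p+1)+1, n+1)`. -/
lemma base_id (p n : ℕ) :
    A p (n+1) + (p+1) * Nat.choose ((n+1)*(p+1)) n
      = Nat.choose ((n+1)*(p+1)+1) (n+1) := by
  have h1 := h_ratio p n
  have hp : (Nat.choose ((n+1)*(p+1)+1) (n+1) : ℚ)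
      = Nat.choose ((n+1)*(p+1)) n + Nat.choose ((n+1)*(p+1)) (n+1) := by
    exact_mod_cast congrArg (Nat.cast : ℕ → ℚ) (Nat.choose_succ_succ' ((n+1)*(p+1)) n)
  have eA : A p (n+1) = (Nat.choose ((n+1)*(p+1)) (n+1) : ℚ) / (p*(n+1)+1) := by
    rw [A, Nat.mul_comm (p+1) (n+1)]; push_cast; ring
  rw [eA, hp]
  have hD : ((p:ℚ)*(n+1)+1) ≠ 0 := by positivity
  field_simp
  linear_combination (-(p:ℚ)) * h1




noncomputable def F (p y n : ℕ) : ℚ :=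
  ∑ j ∈ range (n+1), A p (n-j) * (Nat.choose (y + j*(p+1)) j : ℚ)

noncomputable def G (p y n : ℕ) : ℚ :=
  ∑ j ∈ range (n+1), A p (n-j) * (Nat.choose (y + (j+1)*(p+1)) (j+1) : ℚ)


lemma F_zero (p y : ℕ) : F p y 0 = 1 := by simp [F, A_zero]

lemma F_succ (p y n : ℕ) : F p y (n+1) = A p (n+1) + G p y n := by
  rw [F, Finset.sum_range_succ']
  simp only [Nat.succ_sub_succ, Nat.sub_zero, Nat.choose_zero_right, Nat.cast_one, mul_one]
  rw [G, add_comm]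

lemma G_succ_y (p y n : ℕ) : G p (y+1) n = G p y n + F p (y+(p+1)) n := by
  rw [G, F, G, ← Finset.sum_add_distrib]
  refine Finset.sum_congr rfl fun j _ => ?_
  rw [← mul_add]
  congr 1
  have h : Nat.choose ((y + (j+1)*(p+1)) + 1) (j+1)
      = Nat.choose (y + (j+1)*(p+1)) j + Nat.choose (y + (j+1)*(p+1)) (j+1) := Nat.choose_succ_succ' _ _
  have e1 : y + 1 + (j+1)*(p+1) = (y + (j+1)*(p+1)) + 1 := by ring
  have e2 : y + (p+1) + j*(p+1) = y + (j+1)*(p+1) := by ring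
  rw [e1, e2, h]
  push_cast; ring


lemma G_zero_y (p n : ℕ) : G p 0 n = (p+1) * F p p n := by
  rw [G, F, Finset.mul_sum]
  refine Finset.sum_congr rfl fun j _ => ?_
  rw [Nat.zero_add, T1]
  ring

lemma key1 (p : ℕ) : ∀ n y, F p y n = (Nat.choose (1 + y + n*(p+1)) n : ℚ) := by
  intro n
  induction n with
  | zero => intro y; simp [F_zero]
  | succ n ih =>
    intro y
    induction y with
    | zero =>
      rw [F_succ, G_zero_y, ih p]
      have e : 1 + p + n*(p+1) = (n+1)*(p+1) := by ring
      rw [e]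
      have e2 : 1 + 0 + (n+1)*(p+1) = (n+1)*(p+1) + 1 := by ring
      rw [e2]
      exact base_id p n
    | succ y ihy =>
      rw [F_succ, G_succ_y, ← add_assoc, ← F_succ, ihy, ih (y+(p+1))]
      have h : Nat.choose ((1 + y + (n+1)*(p+1)) + 1) (n+1)
          = Nat.choose (1 + y + (n+1)*(p+1)) n + Nat.choose (1 + y + (n+1)*(p+1)) (n+1) :=
        Nat.choose_succ_succ' _ _
      have e1 : 1 + (y+1) + (n+1)*(p+1) = (1 + y + (n+1)*(p+1)) + 1 := by ring
      have e2 : 1 + (y+(p+1)) + n*(p+1) = 1 + y + (n+1)*(p+1) := by ring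
      rw [e1, e2, h]
      push_cast; ring


lemma T3 (p i : ℕ) : A p (i+1)
    = (Nat.choose ((i+1)*(p+1)+1) (i+1) : ℚ) - (p+1) * Nat.choose ((i+1)*(p+1)) i := by
  have h1 := h_ratio p i
  have hp : (Nat.choose ((i+1)*(p+1)+1) (i+1) : ℚ)
      = Nat.choose ((i+1)*(p+1)) i + Nat.choose ((i+1)*(p+1)) (i+1) := by
    exact_mod_cast congrArg (Nat.cast : ℕ → ℚ) (Nat.choose_succ_succ' ((i+1)*(p+1)) i)
  have eA : A p (i+1) = (Nat.choose ((i+1)*(p+1)) (i+1) : ℚ) / (p*(i+1)+1) := by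
    rw [A, Nat.mul_comm (p+1) (i+1)]; push_cast; ring
  rw [eA, hp]
  have hD : ((p:ℚ)*(i+1)+1) ≠ 0 := by positivity
  field_simp
  linear_combination (-(p:ℚ)) * h1

noncomputable def T (p n : ℕ) : ℚ := ∑ k ∈ range (n+1), A p (k+1) * A p (n-k+1)

lemma T_split (p n : ℕ) : T p n
    = (∑ k ∈ range (n+1), A p ((n-k)+1) * (Nat.choose ((k+1)*(p+1)+1) (k+1) : ℚ))
      - (p+1) * ∑ k ∈ range (n+1), A p ((n-k)+1) * (Nat.choose ((k+1)*(p+1)) k : ℚ) := by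
  have refl1 := Finset.sum_range_reflect
    (fun k => A p ((n-k)+1) * ((Nat.choose ((k+1)*(p+1)+1) (k+1) : ℚ)
      - (p+1) * Nat.choose ((k+1)*(p+1)) k)) (n+1)
  have step : T p n = ∑ k ∈ range (n+1), A p ((n-k)+1) *
      ((Nat.choose ((k+1)*(p+1)+1) (k+1) : ℚ) - (p+1) * Nat.choose ((k+1)*(p+1)) k) := by
    rw [T, ← refl1]
    refine Finset.sum_congr rfl fun k hk => ?_
    have hk' : k ≤ n := by simpa [Nat.lt_succ_iff] using hk
    have e1 : n + 1 - 1 - k = n - k := by omega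
    have e2 : n - (n - k) = k := by omega
    rw [e1, e2, ← T3 p (n-k)]
  rw [step, Finset.mul_sum, ← Finset.sum_sub_distrib]
  exact Finset.sum_congr rfl fun k _ => by ring


lemma sum1_closed (p n : ℕ) :
    (∑ k ∈ range (n+1), A p ((n-k)+1) * (Nat.choose ((k+1)*(p+1)+1) (k+1) : ℚ))
      = F p 1 (n+2) - A p (n+2) - Nat.choose ((n+2)*(p+1)+1) (n+2) := by
  have hF : F p 1 (n+2) = (∑ k ∈ range (n+1), A p ((n-k)+1)
        * (Nat.choose ((k+1)*(p+1)+1) (k+1) : ℚ))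
      + A p (n+2) + Nat.choose ((n+2)*(p+1)+1) (n+2) := by
    rw [F, Finset.sum_range_succ, Finset.sum_range_succ']
    simp only [Nat.sub_self, A_zero, one_mul, Nat.succ_sub_succ, Nat.sub_zero,
      Nat.choose_zero_right, Nat.cast_one, mul_one]
    have e3 : 1 + (n+2)*(p+1) = (n+2)*(p+1)+1 := by ring
    rw [e3]
    congr 1
    · congr 1
      refine Finset.sum_congr rfl fun k hk => ?_
      have hk' : k ≤ n := by simpa [Nat.lt_succ_iff] using hk
      have e1 : n + 1 - k = (n - k) + 1 := by omega
      have e2 : 1 + (k+1)*(p+1) = (k+1)*(p+1)+1 := by ring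
      rw [e1, e2]
  rw [hF]; ring

lemma sum2_closed (p n : ℕ) :
    (∑ k ∈ range (n+1), A p ((n-k)+1) * (Nat.choose ((k+1)*(p+1)) k : ℚ))
      = F p (p+1) (n+1) - Nat.choose ((n+2)*(p+1)) (n+1) := by
  have hF : F p (p+1) (n+1) = (∑ k ∈ range (n+1), A p ((n-k)+1)
        * (Nat.choose ((k+1)*(p+1)) k : ℚ))
      + Nat.choose ((n+2)*(p+1)) (n+1) := by
    rw [F, Finset.sum_range_succ]
    simp only [Nat.sub_self, A_zero, one_mul]
    have e3 : p + 1 + (n+1)*(p+1) = (n+2)*(p+1) := by ring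
    rw [e3]
    congr 1
    refine Finset.sum_congr rfl fun k hk => ?_
    have hk' : k ≤ n := by simpa [Nat.lt_succ_iff] using hk
    have e1 : n + 1 - k = (n - k) + 1 := by omega
    have e2 : p + 1 + k*(p+1) = (k+1)*(p+1) := by ring
    rw [e1, e2]
  rw [hF]; ring


lemma key3 (p j : ℕ) :
    ((j:ℚ)+1) * A p (j+2) = (2*((p:ℚ)+1) + p*j)/2 * T p j := by
  rw [T_split, sum1_closed, sum2_closed, key1 p (j+2) 1, key1 p (j+1) (p+1)]
  have eA : A p (j+2) = (Nat.choose ((j+2)*(p+1)) (j+2) : ℚ) / (p*(j+2)+1) := by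
    rw [A, Nat.mul_comm (p+1) (j+2)]; push_cast; ring
  have ec1 : (1 + (p+1) + (j+1)*(p+1)) = (j+2)*(p+1)+1 := by ring
  have eP2 : (1 + 1 + (j+2)*(p+1)) = (j+2)*(p+1)+2 := by ring
  rw [eA, ec1, eP2]
  have hP2 : (Nat.choose ((j+2)*(p+1)+2) (j+2) : ℚ)
      = Nat.choose ((j+2)*(p+1)+1) (j+1) + Nat.choose ((j+2)*(p+1)+1) (j+2) := by
    exact_mod_cast congrArg (Nat.cast : ℕ → ℚ)
      (Nat.choose_succ_succ' ((j+2)*(p+1)+1) (j+1))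
  have hP1 : (Nat.choose ((j+2)*(p+1)+1) (j+2) : ℚ)
      = Nat.choose ((j+2)*(p+1)) (j+1) + Nat.choose ((j+2)*(p+1)) (j+2) := by
    exact_mod_cast congrArg (Nat.cast : ℕ → ℚ)
      (Nat.choose_succ_succ' ((j+2)*(p+1)) (j+1))
  have h4 : (Nat.choose ((j+2)*(p+1)) (j+2) : ℚ) * (j+2)
      = Nat.choose ((j+2)*(p+1)) (j+1) * (p*(j+2)+1) := by
    have h := Nat.choose_succ_right_eq ((j+2)*(p+1)) (j+1)
    have e : (j+2)*(p+1) - (j+1) = p*(j+2)+1 := by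
      have : (j+2)*(p+1) = p*(j+2) + (j+2) := by ring
      omega
    rw [e] at h
    exact_mod_cast congrArg (Nat.cast : ℕ → ℚ) h
  have h1 : (Nat.choose ((j+2)*(p+1)+1) (j+2) : ℚ) * (j+2)
      = Nat.choose ((j+2)*(p+1)+1) (j+1) * (p*(j+2)+2) := by
    have h := Nat.choose_succ_right_eq ((j+2)*(p+1)+1) (j+1)
    have e : (j+2)*(p+1)+1 - (j+1) = p*(j+2)+2 := by
      have : (j+2)*(p+1) = p*(j+2) + (j+2) := by ring
      omega
    rw [e] at h
    exact_mod_cast congrArg (Nat.cast : ℕ → ℚ) h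
  rw [hP2, hP1] at *
  have hq : ((p:ℚ)*(j+2)+1) ≠ 0 := by positivity
  field_simp
  linear_combination
    ((p:ℚ)*((p:ℚ)*((j:ℚ)+2)+1) + (p:ℚ) + 2) * h4
      - ((p:ℚ) * ((p:ℚ)*((j:ℚ)+2)+1)) * h1


lemma deriv_smul_X_pow (q : ℚ) (E : ℕ) :
    PowerSeries.derivative ℚ (q • (PowerSeries.X : PowerSeries ℚ) ^ E)
      = (q * E) • (PowerSeries.X : PowerSeries ℚ) ^ (E - 1) := by
  ext n
  rw [PowerSeries.coeff_derivative]
  rw [PowerSeries.smul_eq_C_mul, PowerSeries.smul_eq_C_mul,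
    PowerSeries.coeff_C_mul, PowerSeries.coeff_C_mul,
    PowerSeries.coeff_X_pow, PowerSeries.coeff_X_pow]
  rcases E with _ | E
  · simp
  · simp only [Nat.add_sub_cancel]
    by_cases h : n = E
    · subst h; simp
    · have h2 : ¬ (n + 1 = E + 1) := by omega
      simp [h, h2]

lemma smul_X_pow_mul_natCast (q : ℚ) (E n : ℕ) :
    (q • (PowerSeries.X : PowerSeries ℚ) ^ E) * (n : PowerSeries ℚ)
      = ((n:ℚ) * q) • (PowerSeries.X : PowerSeries ℚ) ^ E := by
  rw [PowerSeries.smul_eq_C_mul, PowerSeries.smul_eq_C_mul, ← map_natCast (PowerSeries.C (R := ℚ)) n,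
    map_mul]
  ring

lemma smul_X_pow_mul_smul_X_pow (a b : ℚ) (E F : ℕ) :
    (a • (PowerSeries.X : PowerSeries ℚ) ^ E) * (b • (PowerSeries.X : PowerSeries ℚ) ^ F)
      = (a * b) • (PowerSeries.X : PowerSeries ℚ) ^ (E + F) := by
  rw [PowerSeries.smul_eq_C_mul, PowerSeries.smul_eq_C_mul, PowerSeries.smul_eq_C_mul,
    map_mul, pow_add]
  ring

end BurgersAux

open PowerSeries

/-- For `m ≥ 1` and a constant `c`, the formal power series
`u(x,t) = x^m Σ_{k≥1} (c^k/((m-1)k+1)) binom(mk,k) (x^{m-1} t)^{k-1}`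
(viewed as an element of `ℚ⟦x⟧⟦t⟧`, the `t`-coefficient of `t^{k-1}` being
`(c^k/((m-1)k+1)) binom(mk,k) x^{m+(m-1)(k-1)}`) satisfies the inviscid Burgers
equation `∂ₜ u = ∂ₓ (u²/2)` with initial condition `u(x,0) = c x^m`. -/
theorem burgers_fussCatalan_solution (m : ℕ) (hm : 1 ≤ m) (c : ℚ) :
    let u : PowerSeries (PowerSeries ℚ) :=
      PowerSeries.mk fun j =>
        (c ^ (j + 1) / (((m : ℚ) - 1) * ((j : ℚ) + 1) + 1) *
          (Nat.choose (m * (j + 1)) (j + 1) : ℚ)) •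
          ((PowerSeries.X : PowerSeries ℚ) ^ (m + (m - 1) * j))
    (∀ j : ℕ, PowerSeries.coeff (R := PowerSeries ℚ) j (PowerSeries.derivative (PowerSeries ℚ) u) =
        PowerSeries.derivative ℚ
          (PowerSeries.coeff (R := PowerSeries ℚ) j (((1 : ℚ) / 2) • u ^ 2))) ∧
    PowerSeries.constantCoeff (R := PowerSeries ℚ) u = c • (PowerSeries.X : PowerSeries ℚ) ^ m := by
  intro u
  obtain ⟨p, rfl⟩ : ∃ p, m = p + 1 := ⟨m - 1, by omega⟩
  have hcoeff : ∀ k : ℕ, PowerSeries.coeff (R := PowerSeries ℚ) k u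
      = (c ^ (k+1) * BurgersAux.A p (k+1)) • (PowerSeries.X : PowerSeries ℚ) ^ ((p+1) + p*k) := by
    intro k
    have hu : u = PowerSeries.mk fun j =>
        (c ^ (j + 1) / ((((p+1:ℕ) : ℚ) - 1) * ((j : ℚ) + 1) + 1) *
          (Nat.choose ((p+1) * (j + 1)) (j + 1) : ℚ)) •
          ((PowerSeries.X : PowerSeries ℚ) ^ ((p+1) + ((p+1) - 1) * j)) := rfl
    rw [hu, PowerSeries.coeff_mk]
    have e1 : (p+1) - 1 = p := by omega
    rw [e1]
    congr 1
    rw [BurgersAux.A]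
    push_cast
    ring
  constructor
  · intro j
    rw [PowerSeries.coeff_derivative, hcoeff (j+1)]
    have ecast : ((j : PowerSeries ℚ) + 1) = ((j+1 : ℕ) : PowerSeries ℚ) := by push_cast; ring
    rw [ecast, BurgersAux.smul_X_pow_mul_natCast]
    have h2 : (PowerSeries.coeff (R := PowerSeries ℚ) j) (((1:ℚ)/2) • u^2)
        = ((1:ℚ)/2) • (PowerSeries.coeff (R := PowerSeries ℚ) j) (u^2) :=
      (PowerSeries.coeff (R := PowerSeries ℚ) j).map_smul_of_tower _ _
    have h3 : (PowerSeries.coeff (R := PowerSeries ℚ) j) (u^2)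
        = (∑ k ∈ Finset.range (j+1),
            (c^(k+1) * BurgersAux.A p (k+1)) * (c^(j-k+1) * BurgersAux.A p (j-k+1)))
          • (PowerSeries.X : PowerSeries ℚ) ^ (2*(p+1)+p*j) := by
      rw [sq, PowerSeries.coeff_mul, Finset.Nat.sum_antidiagonal_eq_sum_range_succ_mk]
      have hterm : ∀ k ∈ Finset.range (j+1),
          (PowerSeries.coeff (R := PowerSeries ℚ) (k, j-k).1) u
            * (PowerSeries.coeff (R := PowerSeries ℚ) (k, j-k).2) u
          = ((c^(k+1) * BurgersAux.A p (k+1)) * (c^(j-k+1) * BurgersAux.A p (j-k+1)))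
            • (PowerSeries.X : PowerSeries ℚ) ^ (2*(p+1)+p*j) := by
        intro k hk
        have hk' : k ≤ j := by simpa [Nat.lt_succ_iff] using hk
        show (PowerSeries.coeff (R := PowerSeries ℚ) k) u
            * (PowerSeries.coeff (R := PowerSeries ℚ) (j-k)) u = _
        rw [hcoeff k, hcoeff (j-k), BurgersAux.smul_X_pow_mul_smul_X_pow]
        have e : (p+1) + p*k + ((p+1) + p*(j-k)) = 2*(p+1) + p*j := by
          have hkk : k + (j-k) = j := by omega
          calc (p+1) + p*k + ((p+1) + p*(j-k)) = 2*(p+1) + p*(k+(j-k)) := by ring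
          _ = 2*(p+1) + p*j := by rw [hkk]
        rw [e]
      rw [Finset.sum_congr rfl hterm, ← Finset.sum_smul]
    rw [h2, h3, smul_smul, BurgersAux.deriv_smul_X_pow]
    have eE : 2*(p+1)+p*j - 1 = (p+1)+p*(j+1) := by
      have : 2*(p+1)+p*j = ((p+1)+p*(j+1)) + 1 := by ring
      omega
    rw [eE]
    congr 1
    have hsum : (∑ k ∈ Finset.range (j+1),
        (c^(k+1) * BurgersAux.A p (k+1)) * (c^(j-k+1) * BurgersAux.A p (j-k+1)))
        = c^(j+2) * BurgersAux.T p j := by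
      rw [BurgersAux.T, Finset.mul_sum]
      refine Finset.sum_congr rfl fun k hk => ?_
      have hk' : k ≤ j := by simpa [Nat.lt_succ_iff] using hk
      have ec : c^(k+1) * c^(j-k+1) = c^(j+2) := by
        rw [← pow_add]
        congr 1
        omega
      calc (c^(k+1) * BurgersAux.A p (k+1)) * (c^(j-k+1) * BurgersAux.A p (j-k+1))
          = (c^(k+1) * c^(j-k+1)) * (BurgersAux.A p (k+1) * BurgersAux.A p (j-k+1)) := by ring
        _ = c^(j+2) * (BurgersAux.A p (k+1) * BurgersAux.A p (j-k+1)) := by rw [ec]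
    rw [hsum]
    have hk3 := BurgersAux.key3 p j
    push_cast
    linear_combination c^(j+2) * hk3
  · rw [← PowerSeries.coeff_zero_eq_constantCoeff_apply, hcoeff 0]
    have hA1 : BurgersAux.A p 1 = 1 := by
      rw [BurgersAux.A, Nat.mul_one, Nat.choose_one_right]
      push_cast
      rw [mul_one]
      exact div_self (by positivity)
    rw [hA1]
    norm_num
end

section
/- For every integer n ≥ 2, the formal power series identity ( Σ_{k≥1} z^{k-1}/((n-1)k+1) · binom(nk,k) )^{1/n} = 1 + Σ_{k≥1} z^k/((n-1)k+1) · binom(nk,k) holds, where the n-th root is the unique formal power series with constant term 1. -/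
open PowerSeries Finset

/-- Raney/Fuss–Catalan numbers: `Aa n k r = r/(r+nk) * C(r+nk, k)`, the coefficient of
`z^k` in `B^r` where `B` is the Fuss–Catalan generating function. -/
noncomputable def Aa (n k r : ℕ) : ℚ :=
  if k = 0 then 1 else (r : ℚ) / ((r : ℚ) + (n : ℚ) * (k : ℚ)) * (Nat.choose (r + n * k) k : ℚ)

lemma Aa_zero_right (n k : ℕ) (hk : k ≠ 0) : Aa n k 0 = 0 := by
  simp [Aa, hk]

lemma Aa_zero_left (n r : ℕ) : Aa n 0 r = 1 := by simp [Aa]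

/-- Pascal-type recurrence for Raney numbers. -/
lemma Aa_rec (n : ℕ) (hn : 1 ≤ n) (k r : ℕ) :
    Aa n (k + 1) (r + 1) = Aa n (k + 1) r + Aa n k (r + n) := by
  rcases Nat.eq_zero_or_pos k with hk | hk
  · subst hk
    have h1 : ((r : ℚ) + 1 + (n : ℚ) * 1) ≠ 0 := by positivity
    have h2 : ((r : ℚ) + (n : ℚ) * 1) ≠ 0 := by
      have : (1 : ℚ) ≤ (n : ℚ) := by exact_mod_cast hn
      nlinarith
    simp only [Aa, if_neg (one_ne_zero), Nat.choose_one_right, mul_one]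
    push_cast
    field_simp
    simp only [Nat.choose_one_right, mul_one]
    push_cast
    ring
  · -- general case, k ≥ 1
    obtain ⟨j, rfl⟩ := Nat.exists_eq_add_of_le hk
    set k := 1 + j with hkdef
    have hkne : k ≠ 0 := by omega
    simp only [Aa, if_neg (Nat.succ_ne_zero k), if_neg hkne]
    set M : ℕ := r + n * (k + 1) with hM
    have e1 : r + 1 + n * (k + 1) = M + 1 := by omega
    have e2 : r + n + n * k = M := by rw [hM]; ring
    rw [e1, e2]
    have hkM : k + 1 ≤ M := by
      have : 1 * (k + 1) ≤ n * (k + 1) := Nat.mul_le_mul_right _ hn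
      omega
    have h1 : (Nat.choose (M + 1) (k + 1) : ℚ) =
        (Nat.choose M k : ℚ) + (Nat.choose M (k + 1) : ℚ) := by
      exact_mod_cast congrArg (Nat.cast (R := ℚ)) (Nat.choose_succ_succ M k)
    have h2 : (Nat.choose M (k + 1) : ℚ) * ((k : ℚ) + 1) =
        (Nat.choose M k : ℚ) * ((M : ℚ) - (k : ℚ)) := by
      have := Nat.choose_succ_right_eq M k
      have hc : ((M - k : ℕ) : ℚ) = (M : ℚ) - (k : ℚ) :=
        Nat.cast_sub (le_trans (Nat.le_succ k) hkM)
      rw [← hc]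
      exact_mod_cast congrArg (Nat.cast (R := ℚ)) this
    have hMn0 : ((M : ℚ)) ≠ 0 := by
      have : (0:ℕ) < M := by omega
      exact_mod_cast this.ne'
    have hM1n0 : ((M : ℚ) + 1) ≠ 0 := by positivity
    have hk1n0 : ((k : ℚ) + 1) ≠ 0 := by positivity
    have hMr : (M : ℚ) = (r : ℚ) + (n : ℚ) * ((k : ℚ) + 1) := by
      rw [hM]; push_cast; ring
    -- rewrite cast denominators to match M
    have d1 : ((r : ℚ) + 1 + (n : ℚ) * ((k : ℚ) + 1)) = (M : ℚ) + 1 := by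
      rw [hMr]; ring
    have d2 : ((r : ℚ) + (n : ℚ) + (n : ℚ) * (k : ℚ)) = (M : ℚ) := by
      rw [hMr]; ring
    push_cast
    rw [d1, d2, show (r:ℚ) + (n:ℚ)*((k:ℚ)+1) = (M:ℚ) from hMr.symm]
    rw [div_mul_eq_mul_div, div_mul_eq_mul_div, div_mul_eq_mul_div,
      div_add_div _ _ hMn0 hMn0, div_eq_div_iff hM1n0 (by positivity)]
    have hMrk : (M : ℚ) * ((r:ℚ) + 1) = (r:ℚ) * ((M:ℚ) - (k:ℚ)) + ((r:ℚ) + (n:ℚ)) * ((k:ℚ) + 1) := by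
      rw [hMr]; ring
    -- now pure algebra from h1, h2
    have hc : (Nat.choose (M+1) (k+1) : ℚ) * ((k:ℚ)+1) = (Nat.choose M k : ℚ) * ((M:ℚ)+1) := by
      linear_combination h1 * ((k:ℚ)+1) + h2
    have hG0 : ((((r:ℚ) + 1) * (Nat.choose (M+1) (k+1) : ℚ) * ((M:ℚ)*(M:ℚ)) -
        ((r:ℚ) * (Nat.choose M (k+1) : ℚ) * (M:ℚ) +
          (M:ℚ) * (((r:ℚ)+(n:ℚ)) * (Nat.choose M k : ℚ))) * ((M:ℚ)+1)) * ((k:ℚ)+1)) = 0 := by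
      linear_combination ((r:ℚ)+1) * (M:ℚ)^2 * hc - ((M:ℚ)+1) * (M:ℚ) * (r:ℚ) * h2 +
        (Nat.choose M k : ℚ) * ((M:ℚ)+1) * (M:ℚ) * hMrk
    rcases mul_eq_zero.mp hG0 with h | h
    · linarith [sub_eq_zero.mp h]
    · exact absurd h hk1n0

/-- Convolution identity (Raney / Rothe–Hagen): `A_k(r+s) = Σ A_i(r) A_{k-i}(s)`. -/
lemma Aa_conv (n : ℕ) (hn : 1 ≤ n) :
    ∀ k r s : ℕ, Aa n k (r + s) = ∑ i ∈ range (k + 1), Aa n i r * Aa n (k - i) s := by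
  intro k
  induction k with
  | zero => intro r s; simp [Aa_zero_left]
  | succ k ihk =>
    intro r
    induction r with
    | zero =>
      intro s
      rw [Finset.sum_range_succ' (fun i => Aa n i 0 * Aa n (k + 1 - i) s) (k + 1)]
      have : ∀ i ∈ range (k + 1), Aa n (i + 1) 0 * Aa n (k + 1 - (i + 1)) s = 0 := by
        intro i _
        rw [Aa_zero_right n (i + 1) (Nat.succ_ne_zero i), zero_mul]
      rw [Finset.sum_congr rfl this]
      simp [Aa_zero_left]
    | succ r ihr =>
      intro s
      have key : Aa n (k + 1) (r + 1 + s) = Aa n (k + 1) (r + s) + Aa n k (r + s + n) := by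
        have := Aa_rec n hn k (r + s)
        convert this using 2 <;> omega
      rw [key, ihr s]
      have h2 : Aa n k (r + s + n) = ∑ i ∈ range (k + 1), Aa n i (r + n) * Aa n (k - i) s := by
        have := ihk (r + n) s
        convert this using 2
        omega
      rw [h2]
      -- RHS: split off first term
      rw [Finset.sum_range_succ' (fun i => Aa n i (r + 1) * Aa n (k + 1 - i) s) (k + 1),
        Finset.sum_range_succ' (fun i => Aa n i r * Aa n (k + 1 - i) s) (k + 1)]
      simp only [Aa_zero_left, one_mul, Nat.sub_zero]
      have expand : ∀ i ∈ range (k + 1),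
          Aa n (i + 1) (r + 1) * Aa n (k + 1 - (i + 1)) s =
          Aa n (i + 1) r * Aa n (k + 1 - (i + 1)) s + Aa n i (r + n) * Aa n (k - i) s := by
        intro i _
        have hsub : k + 1 - (i + 1) = k - i := by omega
        rw [hsub, Aa_rec n hn i r, add_mul]
      rw [Finset.sum_congr rfl expand, Finset.sum_add_distrib]
      ring

/-- For every integer `n ≥ 2`, with `A = Σ_{k≥1} z^{k-1}/((n-1)k+1) · binom(nk,k)` and
`B = 1 + Σ_{k≥1} z^k/((n-1)k+1) · binom(nk,k)`, the series `B` is the unique formal power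
series with constant term `1` whose `n`-th power equals `A`; i.e. `A^{1/n} = B`. -/
theorem fussCatalan_root_identity (n : ℕ) (hn : 2 ≤ n) :
    let A : PowerSeries ℚ := PowerSeries.mk fun j =>
      (1 / (((n : ℚ) - 1) * ((j : ℚ) + 1) + 1)) * (Nat.choose (n * (j + 1)) (j + 1) : ℚ)
    let B : PowerSeries ℚ := PowerSeries.mk fun k =>
      if k = 0 then 1 else (1 / (((n : ℚ) - 1) * (k : ℚ) + 1)) * (Nat.choose (n * k) k : ℚ)
    PowerSeries.constantCoeff B = 1 ∧ B ^ n = A ∧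
      ∀ r : PowerSeries ℚ, PowerSeries.constantCoeff r = 1 → r ^ n = A → r = B := by
  intro A B
  have hn1 : 1 ≤ n := le_trans (by norm_num) hn
  -- B equals the series with coefficients Aa n k 1
  have hBcoeff : ∀ k, (PowerSeries.coeff k) B = Aa n k 1 := by
    intro k
    rw [show B = PowerSeries.mk fun k =>
      if k = 0 then 1 else (1 / (((n : ℚ) - 1) * (k : ℚ) + 1)) * (Nat.choose (n * k) k : ℚ) from rfl,
      PowerSeries.coeff_mk]
    rcases Nat.eq_zero_or_pos k with hk | hk
    · subst hk; simp [Aa]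
    · have hkne : k ≠ 0 := hk.ne'
      rw [if_neg hkne]
      unfold Aa
      rw [if_neg hkne]
      -- 1/((n-1)k+1) * C(nk,k) = 1/(1+nk) * C(1+nk, k)
      have hmul := Nat.choose_mul_succ_eq (n * k) k
      have hle : k ≤ n * k := Nat.le_mul_of_pos_left k (by omega)
      have hcast : ((n * k + 1 - k : ℕ) : ℚ) = (n:ℚ) * k + 1 - k := by
        push_cast [Nat.cast_sub (by omega : k ≤ n * k + 1)]
        ring
      have hmulq : (Nat.choose (n * k) k : ℚ) * ((n:ℚ) * k + 1) =
          (Nat.choose (n * k + 1) k : ℚ) * ((n:ℚ) * k + 1 - k) := by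
        rw [← hcast]
        exact_mod_cast congrArg (Nat.cast (R := ℚ)) hmul
      have harg : 1 + n * k = n * k + 1 := by omega
      rw [harg]
      have h1 : ((n:ℚ) - 1) * k + 1 ≠ 0 := by
        have : (2:ℚ) ≤ (n:ℚ) := by exact_mod_cast hn
        have : (1:ℚ) ≤ (n:ℚ) - 1 := by linarith
        have hk1 : (1:ℚ) ≤ (k:ℚ) := by exact_mod_cast hk
        nlinarith
      have h2 : (1:ℚ) + (n:ℚ) * k ≠ 0 := by positivity
      push_cast
      field_simp
      nlinarith [hmulq]
  have hB1 : PowerSeries.constantCoeff B = 1 := by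
    have := hBcoeff 0
    rw [PowerSeries.coeff_zero_eq_constantCoeff] at this
    rw [this]; simp [Aa]
  -- coefficients of powers of B
  have hpow : ∀ (m k : ℕ), (PowerSeries.coeff k) (B ^ m) = Aa n k m := by
    intro m
    induction m with
    | zero =>
      intro k
      rcases Nat.eq_zero_or_pos k with hk | hk
      · subst hk; simp [Aa]
      · rw [pow_zero, PowerSeries.coeff_one, if_neg hk.ne', Aa_zero_right n k hk.ne']
    | succ m ih =>
      intro k
      rw [pow_succ', PowerSeries.coeff_mul,
        Finset.Nat.sum_antidiagonal_eq_sum_range_succ_mk]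
      have : ∀ i ∈ range (k + 1),
          (PowerSeries.coeff (i, k - i).1) B * (PowerSeries.coeff (i, k - i).2) (B ^ m)
          = Aa n i 1 * Aa n (k - i) m := by
        intro i _
        rw [hBcoeff i, ih (k - i)]
      rw [Finset.sum_congr rfl this, ← Aa_conv n hn1 k 1 m, Nat.add_comm 1 m]
  -- B ^ n = A
  have hBnA : B ^ n = A := by
    ext j
    rw [hpow n j, show A = PowerSeries.mk fun j =>
      (1 / (((n : ℚ) - 1) * ((j : ℚ) + 1) + 1)) * (Nat.choose (n * (j + 1)) (j + 1) : ℚ) from rfl,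
      PowerSeries.coeff_mk]
    -- Aa n j n = n/(n+nj) * C(n+nj, j) = C(n(j+1), j)/(j+1)
    rcases Nat.eq_zero_or_pos j with hj | hj
    · subst hj
      simp only [Aa, if_pos rfl]
      have : n * (0 + 1) = n := by ring
      rw [this]
      push_cast
      have h1 : ((n:ℚ) - 1) * (0 + 1) + 1 = (n:ℚ) := by ring
      rw [h1, Nat.choose_one_right]
      have : (n:ℚ) ≠ 0 := by positivity
      field_simp
    · have hjne : j ≠ 0 := hj.ne'
      unfold Aa
      rw [if_neg hjne]
      have harg : n + n * j = n * (j + 1) := by ring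
      rw [harg]
      set m : ℕ := n * (j + 1) with hm
      have hcs := Nat.choose_succ_right_eq m j
      have hjm : j + 1 ≤ m := by
        have : 1 * (j + 1) ≤ n * (j + 1) := Nat.mul_le_mul_right _ hn1
        omega
      have hcast : ((m - j : ℕ) : ℚ) = (m:ℚ) - j := Nat.cast_sub (by omega)
      have hcsq : (Nat.choose m (j + 1) : ℚ) * ((j:ℚ) + 1) = (Nat.choose m j : ℚ) * ((m:ℚ) - j) := by
        rw [← hcast]; exact_mod_cast congrArg (Nat.cast (R := ℚ)) hcs
      have hmq : (m : ℚ) = (n:ℚ) * ((j:ℚ) + 1) := by rw [hm]; push_cast; ring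
      have hd1 : ((n:ℚ) - 1) * ((j:ℚ) + 1) + 1 = (m:ℚ) - j := by rw [hmq]; ring
      have hd2 : (n:ℚ) + (n:ℚ) * (j:ℚ) = (m:ℚ) := by rw [hmq]; ring
      rw [hd1, hd2]
      have hmj : (0:ℚ) < (m:ℚ) - j := by
        have : j < m := by omega
        have h1 : ((j:ℚ)) < (m:ℚ) := by exact_mod_cast this
        linarith
      have hm0 : (m:ℚ) ≠ 0 := by
        have : (0:ℕ) < m := by omega
        exact_mod_cast this.ne'
      have hn0 : (n:ℚ) ≠ 0 := by positivity
      have hj1 : ((j:ℚ) + 1) ≠ 0 := by positivity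
      field_simp
      nlinarith [hcsq]
  refine ⟨hB1, hBnA, ?_⟩
  -- uniqueness
  intro r hr1 hrn
  have hpoweq : r ^ n = B ^ n := by rw [hrn, hBnA]
  have hfact : (∑ i ∈ range n, r ^ i * B ^ (n - 1 - i)) * (r - B) = 0 := by
    rw [geom_sum₂_mul, hpoweq, sub_self]
  rcases mul_eq_zero.mp hfact with h | h
  · exfalso
    have hc : PowerSeries.constantCoeff (∑ i ∈ range n, r ^ i * B ^ (n - 1 - i)) = n := by
      rw [map_sum]
      have : ∀ i ∈ range n, PowerSeries.constantCoeff (r ^ i * B ^ (n - 1 - i)) = 1 := by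
        intro i _
        rw [map_mul, map_pow, map_pow, hr1, hB1, one_pow, one_pow, one_mul]
      rw [Finset.sum_congr rfl this, Finset.sum_const, card_range, nsmul_eq_mul, mul_one]
    rw [h, map_zero] at hc
    have : (n:ℚ) ≠ 0 := by positivity
    exact this hc.symm
  · exact sub_eq_zero.mp h
end

section
/- Let f_n = ∂F_0/∂u_n(u_0,0,0,...) be determined by the recursion f_0 = u_0^2/2, f_1 = u_0 f_0, and f_n = u_0 f_{n-1} + (1/2) Σ_{k=0}^{n-2} f_k f_{n-k-2} for n ≥ 2. Then the generating function f(t) = Σ_{n≥0} f_n t^n satisfies f(t) = u_0^2/2 + u_0 t f(t) + (1/2) t^2 f(t)^2, and explicitly f_n = (2n+1)!!/(n+2)! · u_0^{n+2}. -/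
open PowerSeries Finset Nat

lemma key_nat (n : ℕ) : catalan (n + 1) * (n + 2)! = (2 * n + 1)‼ * 2 ^ (n + 1) := by
  have h1 : Nat.centralBinom (n + 1) * (n + 1)! * (n + 1)! = (2 * n + 2)! := by
    have := Nat.choose_mul_factorial_mul_factorial (show n + 1 ≤ 2 * n + 2 by omega)
    rw [Nat.centralBinom, show 2 * (n + 1) = 2 * n + 2 by ring]
    convert this using 3 <;> omega
  have h2 : (2 * n + 2)! = (2 * n + 1)‼ * 2 ^ (n + 1) * (n + 1)! := by
    have hf : (2 * n + 2)! = (2 * n + 2)‼ * (2 * n + 1)‼ := by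
      have := Nat.factorial_eq_mul_doubleFactorial (2 * n + 1)
      convert this using 2 <;> omega
    have hd : (2 * n + 2)‼ = 2 ^ (n + 1) * (n + 1)! := by
      have := Nat.doubleFactorial_two_mul (n + 1)
      convert this using 2 <;> omega
    rw [hf, hd]; ring
  have h3 : catalan (n + 1) * (n + 2)! = Nat.centralBinom (n + 1) * (n + 1)! := by
    rw [Nat.factorial_succ (n + 1), ← succ_mul_catalan_eq_centralBinom]; ring
  have key : Nat.centralBinom (n + 1) * (n + 1)! * (n + 1)!
      = ((2 * n + 1)‼ * 2 ^ (n + 1)) * (n + 1)! := by rw [h1, h2]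
  have := Nat.eq_of_mul_eq_mul_right (Nat.factorial_pos (n + 1)) key
  rw [h3, this]

lemma cat_rec (n : ℕ) : catalan (n + 3) = 2 * catalan (n + 2)
    + ∑ k ∈ Finset.range (n + 1), catalan (k + 1) * catalan (n - k + 1) := by
  rw [catalan_succ' (n + 2), Nat.sum_antidiagonal_eq_sum_range_succ_mk]
  rw [Finset.sum_range_succ, Finset.sum_range_succ']
  have : ∀ k ∈ Finset.range (n + 1),
      catalan (k + 1) * catalan (n + 2 - (k + 1)) = catalan (k + 1) * catalan (n - k + 1) := by
    intro k hk
    simp only [Finset.mem_range] at hk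
    congr 2
    omega
  rw [Finset.sum_congr rfl this]
  simp
  ring

/-- Let `f n = ∂F₀/∂uₙ(u₀,0,0,...)` be determined by the recursion `f 0 = u₀²/2`,
`f 1 = u₀ f 0`, and `f n = u₀ f (n-1) + (1/2) Σ_{k=0}^{n-2} f k · f (n-k-2)` for `n ≥ 2`.
Then the generating function `F(t) = Σ f n tⁿ` satisfies
`F = u₀²/2 + u₀ t F + (1/2) t² F²`, and explicitly `f n = (2n+1)‼/(n+2)! · u₀^{n+2}`. -/
theorem airy_genus_zero_one_point (u₀ : ℚ) (f : ℕ → ℚ)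
    (h0 : f 0 = u₀ ^ 2 / 2) (h1 : f 1 = u₀ * f 0)
    (hrec : ∀ n : ℕ, f (n + 2) =
      u₀ * f (n + 1) + (1 / 2) * ∑ k ∈ Finset.range (n + 1), f k * f (n - k)) :
    (PowerSeries.mk f = PowerSeries.C (R := ℚ) (u₀ ^ 2 / 2)
        + PowerSeries.C (R := ℚ) u₀ * PowerSeries.X * PowerSeries.mk f
        + ((1 : ℚ) / 2) • (PowerSeries.X ^ 2 * (PowerSeries.mk f) ^ 2)) ∧
    (∀ n : ℕ, f n = ((2 * n + 1)‼ : ℚ) / ((n + 2)! : ℚ) * u₀ ^ (n + 2)) := by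
  constructor
  · ext n
    match n with
    | 0 =>
      simp [h0, coeff_mul]
    | 1 =>
      simp [h1, coeff_mul, Finset.Nat.sum_antidiagonal_eq_sum_range_succ_mk,
        Finset.sum_range_succ, coeff_X_pow]
    | (n + 2) =>
      have hx : (PowerSeries.X ^ 2 * (PowerSeries.mk f) ^ 2 : ℚ⟦X⟧)
          = PowerSeries.X ^ 2 * ((PowerSeries.mk f) * (PowerSeries.mk f)) := by ring
      rw [coeff_mk, map_add, map_add, coeff_C, if_neg (by omega), coeff_smul, hx,
        show n + 2 = n + 2 from rfl]
      rw [mul_assoc, coeff_C_mul, show n + 2 = n + 1 + 1 from rfl, coeff_succ_X_mul,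
        show n + 1 + 1 = n + 2 from rfl, PowerSeries.coeff_X_pow_mul, coeff_mk, coeff_mul,
        Finset.Nat.sum_antidiagonal_eq_sum_range_succ_mk, hrec n]
      simp only [coeff_mk, smul_eq_mul]
      ring
  · have hcat : ∀ n : ℕ, f n = (catalan (n + 1) : ℚ) / 2 ^ (n + 1) * u₀ ^ (n + 2) := by
      intro n
      induction n using Nat.strong_induction_on with
      | _ n ih =>
        match n with
        | 0 => rw [h0, show (0:ℕ)+1 = 1 from rfl, catalan_one]; push_cast; ring
        | 1 => rw [h1, h0]; norm_num [catalan_two]; ring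
        | (n + 2) =>
          rw [hrec n, ih (n + 1) (by omega)]
          have hsum : ∀ k ∈ Finset.range (n + 1), f k * f (n - k)
              = ((catalan (k + 1) * catalan (n - k + 1) : ℕ) : ℚ) * (u₀ ^ (n + 4) / 2 ^ (n + 2)) := by
            intro k hk
            simp only [Finset.mem_range] at hk
            rw [ih k (by omega), ih (n - k) (by omega)]
            have e1 : u₀ ^ (k + 2) * u₀ ^ (n - k + 2) = u₀ ^ (n + 4) := by
              rw [← pow_add]; congr 1; omega
            have e2 : (2 : ℚ) ^ (k + 1) * 2 ^ (n - k + 1) = 2 ^ (n + 2) := by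
              rw [← pow_add]; congr 1; omega
            push_cast
            field_simp
            rw [← e1, ← e2]
            ring
          rw [Finset.sum_congr rfl hsum, ← Finset.sum_mul, ← Nat.cast_sum]
          have := cat_rec n
          have h2 : ((catalan (n + 3) : ℕ) : ℚ)
              = 2 * catalan (n + 2) + ((∑ k ∈ Finset.range (n + 1),
                catalan (k + 1) * catalan (n - k + 1) : ℕ) : ℚ) := by
            exact_mod_cast congrArg (Nat.cast : ℕ → ℚ) this
          have hne : ((∑ k ∈ Finset.range (n + 1),
                catalan (k + 1) * catalan (n - k + 1) : ℕ) : ℚ)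
              = (catalan (n + 3) : ℚ) - 2 * catalan (n + 2) := by linarith
          rw [hne]
          field_simp
          ring
    intro n
    rw [hcat n]
    congr 1
    have := key_nat n
    have h2 : ((catalan (n + 1) : ℕ) : ℚ) * (n + 2)! = ((2 * n + 1)‼ : ℚ) * 2 ^ (n + 1) := by
      exact_mod_cast congrArg (Nat.cast : ℕ → ℚ) this
    have hf : ((n + 2)! : ℚ) ≠ 0 := by positivity
    have hp : ((2 : ℚ) ^ (n + 1)) ≠ 0 := by positivity
    field_simp
    linarith [h2]
end

section
/- Let x = x(f) = f(1 - 2u_0/f^2)^{1/2} be the compositional inverse of f = x(1 + 2u_0/x^2)^{1/2} (as formal Laurent series). Then the coefficient of f^{-(2n+3)} in x equals -(2n+1)!!/(n+2)! · u_0^{n+2}. -/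
open PowerSeries Nat

/-- Let `x = x(f) = f(1 - 2u₀/f²)^{1/2}` be the compositional inverse of
`f = x(1 + 2u₀/x²)^{1/2}`, i.e. `x = f·S(1/f)` where `S` is the unique formal power series
with constant term `1` satisfying `S² = 1 - 2u₀X²` (so that `x² = f² - 2u₀`).  Then the
coefficient of `f^{-(2n+3)}` in `x`, i.e. the coefficient of `X^{2n+4}` in `S`, equals
`-(2n+1)‼/(n+2)! · u₀^{n+2}`. -/
theorem airy_miniversal_coefficients (u₀ : ℚ) (S : PowerSeries ℚ)
    (hS0 : PowerSeries.constantCoeff S = 1)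
    (hS : S ^ 2 = 1 - PowerSeries.C (2 * u₀) * PowerSeries.X ^ 2) :
    ∀ n : ℕ, PowerSeries.coeff (2 * n + 4) S
      = -(((2 * n + 1)‼ : ℚ) / ((n + 2)! : ℚ)) * u₀ ^ (n + 2) := by
  -- Step 1: the ODE `(1 - 2u₀X²)·S' = -2u₀·X·S`.
  have ode : (1 - C (2*u₀) * X^2) * d⁄dX ℚ S = - C (2*u₀) * (X * S) := by
    have h := congrArg (d⁄dX ℚ) hS
    simp only [pow_two] at h hS
    rw [map_sub, Derivation.map_one_eq_zero, Derivation.leibniz, Derivation.leibniz,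
      Derivation.leibniz, derivative_C, derivative_X] at h
    simp only [smul_eq_mul, smul_zero, mul_one, zero_sub, mul_zero, add_zero, smul_add] at h
    have h2 : (2 : ℚ⟦X⟧) * (S * d⁄dX ℚ S) = 2 * (- C (2*u₀) * X) := by
      linear_combination h
    have key : S * d⁄dX ℚ S = - C (2*u₀) * X :=
      mul_left_cancel₀ (by
        intro h0
        have := congrArg (constantCoeff) h0
        rw [map_ofNat] at this; norm_num at this) h2
    calc (1 - C (2*u₀) * X^2) * d⁄dX ℚ S = S * (S * d⁄dX ℚ S) := by
          rw [pow_two, ← hS]; ring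
      _ = - C (2*u₀) * (X * S) := by rw [key]; ring
  -- Step 2: the coefficient recurrence `(k+3)·c_{k+3} = 2u₀·k·c_{k+1}`.
  have hrec : ∀ k : ℕ, ((k:ℚ)+3) * coeff (k+3) S = 2*u₀*(k:ℚ)* coeff (k+1) S := by
    intro k
    have h := congrArg (coeff (k+2)) ode
    rw [sub_mul, one_mul, map_sub, neg_mul, map_neg, coeff_C_mul,
      show k+2 = k+1+1 from rfl, coeff_succ_X_mul, mul_assoc, coeff_C_mul,
      coeff_X_pow_mul'] at h
    have hle : 2 ≤ k+1+1 := by omega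
    rw [if_pos hle, show k+1+1-2 = k from by omega, coeff_derivative, coeff_derivative] at h
    push_cast at h ⊢
    linarith [h]
  -- Step 3: base value `c₂ = -u₀`.
  have hc2 : coeff 2 S = -u₀ := by
    have h := congrArg (coeff 1) ode
    rw [sub_mul, one_mul, map_sub, neg_mul, map_neg, coeff_C_mul,
      show (1:ℕ) = 0+1 from rfl, coeff_succ_X_mul, mul_assoc, coeff_C_mul,
      coeff_X_pow_mul'] at h
    rw [if_neg (by omega), coeff_derivative, coeff_zero_eq_constantCoeff, hS0] at h
    push_cast at h
    linarith [h]
  have hc4 : coeff 4 S = -(u₀^2/2) := by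
    have h := hrec 1
    rw [show (1:ℕ)+3 = 4 from rfl, show (1:ℕ)+1 = 2 from rfl, hc2] at h
    push_cast at h
    linarith [h]
  -- Step 4: induction.
  intro n
  induction n with
  | zero =>
    simp only [Nat.mul_zero, Nat.zero_add, Nat.doubleFactorial]
    rw [hc4]; norm_num; ring
  | succ n ih =>
    have h := hrec (2*n+3)
    rw [show 2*n+3+3 = 2*(n+1)+4 from by ring, show 2*n+3+1 = 2*n+4 from by ring, ih] at h
    have hfac : ((n+2)! : ℚ) ≠ 0 := by positivity
    have hDF : ((2*(n+1)+1)‼ : ℚ) = (2*n+3) * ((2*n+1)‼ : ℚ) := by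
      rw [show 2*(n+1)+1 = 2*n+1+2 from by ring, Nat.doubleFactorial_add_two]
      push_cast; ring
    have hF : ((n+1+2)! : ℚ) = (n+3) * ((n+2)! : ℚ) := by
      rw [show n+1+2 = (n+2)+1 from by ring, Nat.factorial_succ]
      push_cast; ring
    rw [hDF, hF]
    have h26 : ((2*n+3:ℕ):ℚ) + 3 = 2*(n:ℚ)+6 := by push_cast; ring
    rw [h26] at h
    have hne : (2*(n:ℚ)+6) ≠ 0 := by positivity
    field_simp at h ⊢
    push_cast at h ⊢
    linear_combination h/2
end

section
/- There exists a unique sequence (w_n)_{n≥0} of formal power series in variables v_0, v_1, v_2, ... such that the series x = f - Σ_{n≥0} v_n f^{2n-1} - Σ_{n≥0} w_n f^{-2n-3} satisfies (x^2)_- = 0, i.e., all coefficients of negative powers of f in x^2 vanish. The w_n are determined recursively from w_0^{(2)} = v_0^2/2 by the system w_0 = v_0^2/2 + Σ_{j≥1} v_j w_{j-1}, w_1 = Σ_{j≥0} v_j w_j, and w_m = Σ_{j≥0} v_j w_{j+m-1} + (1/2) Σ_{j=0}^{m-2} w_j w_{m-2-j} for m ≥ 2. -/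
open MvPowerSeries Finset

namespace AiryAux

noncomputable section
open Classical

def deg (d : ℕ →₀ ℕ) : ℕ := d.sum fun _ k => k

lemma deg_zero : deg (0 : ℕ →₀ ℕ) = 0 := Finsupp.sum_zero_index

lemma deg_add (a b : ℕ →₀ ℕ) : deg (a + b) = deg a + deg b :=
  Finsupp.sum_add_index' (fun _ => rfl) (fun _ _ _ => rfl)

lemma deg_single (i : ℕ) : deg (Finsupp.single i 1) = 1 :=
  Finsupp.sum_single_index rfl

lemma deg_eq_zero {d : ℕ →₀ ℕ} (h : deg d = 0) : d = 0 := by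
  ext a
  simp only [Finsupp.coe_zero, Pi.zero_apply]
  by_contra ha
  have hmem : a ∈ d.support := Finsupp.mem_support_iff.mpr ha
  have h2 : d a ≤ ∑ x ∈ d.support, d x :=
    Finset.single_le_sum (f := fun i => d i) (fun i _ => Nat.zero_le _) hmem
  have hsum : ∑ x ∈ d.support, d x = 0 := h
  omega

lemma deg_sub_lt {d : ℕ →₀ ℕ} {i : ℕ} (h : i ∈ d.support) :
    deg (d - Finsupp.single i 1) < deg d := by
  have h1 : (1 : ℕ) ≤ d i := Nat.one_le_iff_ne_zero.mpr (Finsupp.mem_support_iff.mp h)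
  have hle : Finsupp.single i 1 ≤ d := Finsupp.single_le_iff.mpr h1
  have hc : (d - Finsupp.single i 1) + Finsupp.single i 1 = d := tsub_add_cancel_of_le hle
  have := deg_add (d - Finsupp.single i 1) (Finsupp.single i 1)
  rw [hc, deg_single] at this
  omega

lemma deg_antidiagonal {d : ℕ →₀ ℕ} {p : (ℕ →₀ ℕ) × (ℕ →₀ ℕ)}
    (hp : p ∈ Finset.HasAntidiagonal.antidiagonal d) (h1 : p.1 ≠ 0) (h2 : p.2 ≠ 0) :
    deg p.1 < deg d ∧ deg p.2 < deg d := by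
  rw [Finset.HasAntidiagonal.mem_antidiagonal] at hp
  have hadd : deg p.1 + deg p.2 = deg d := by rw [← deg_add, hp]
  have e1 : deg p.1 ≠ 0 := fun h => h1 (deg_eq_zero h)
  have e2 : deg p.2 ≠ 0 := fun h => h2 (deg_eq_zero h)
  omega


lemma coeff_X_mul' (a : ℕ) (φ : MvPowerSeries ℕ ℂ) (d : ℕ →₀ ℕ) :
    MvPowerSeries.coeff d (MvPowerSeries.X a * φ) =
      if a ∈ d.support then MvPowerSeries.coeff (d - Finsupp.single a 1) φ else 0 := by
  rw [MvPowerSeries.X, MvPowerSeries.coeff_monomial_mul]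
  by_cases h : a ∈ d.support
  · rw [if_pos h, if_pos, one_mul]
    exact Finsupp.single_le_iff.mpr (Nat.one_le_iff_ne_zero.mpr (Finsupp.mem_support_iff.mp h))
  · rw [if_neg h, if_neg]
    intro hle
    exact h (Finsupp.mem_support_iff.mpr
      (Nat.one_le_iff_ne_zero.mp (Finsupp.single_le_iff.mp hle)))

lemma summable_cXmul (c : ℕ) (g : ℕ → MvPowerSeries ℕ ℂ) (d : ℕ →₀ ℕ) :
    Summable (fun j => MvPowerSeries.coeff d (MvPowerSeries.X (j + c) * g j)) := by
  apply summable_of_ne_finset_zero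
    (s := (d.support.filter (fun i => c ≤ i)).image (fun i => i - c))
  intro b hb
  rw [coeff_X_mul', if_neg]
  intro hmem
  exact hb (Finset.mem_image.mpr ⟨b + c, Finset.mem_filter.mpr ⟨hmem, Nat.le_add_left _ _⟩,
    by omega⟩)

lemma tsum_cXmul (c : ℕ) (g : ℕ → MvPowerSeries ℕ ℂ) (d : ℕ →₀ ℕ) :
    ∑' j : ℕ, MvPowerSeries.coeff d (MvPowerSeries.X (j + c) * g j) =
      ∑ i ∈ d.support.filter (fun i => c ≤ i),
        MvPowerSeries.coeff (d - Finsupp.single i 1) (g (i - c)) := by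
  rw [tsum_eq_sum (s := (d.support.filter (fun i => c ≤ i)).image (fun i => i - c))
    (by
      intro b hb
      rw [coeff_X_mul', if_neg]
      intro hmem
      exact hb (Finset.mem_image.mpr ⟨b + c, Finset.mem_filter.mpr ⟨hmem, Nat.le_add_left _ _⟩,
        by omega⟩))]
  rw [Finset.sum_image (by
    intro x hx y hy hxy
    simp only [Finset.mem_coe, Finset.mem_filter] at hx hy hxy
    omega)]
  apply Finset.sum_congr rfl
  intro i hi
  simp only [Finset.mem_filter] at hi
  rw [Nat.sub_add_cancel hi.2, coeff_X_mul', if_pos hi.1]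


def step (F : ℕ → (ℕ →₀ ℕ) → ℂ) : ℕ → (ℕ →₀ ℕ) → ℂ := fun n d =>
  match n with
  | 0 => MvPowerSeries.coeff d (((1 : ℂ) / 2) • (MvPowerSeries.X 0 : MvPowerSeries ℕ ℂ) ^ 2)
      + ∑ i ∈ d.support.filter (fun i => 1 ≤ i), F (i - 1) (d - Finsupp.single i 1)
  | 1 => ∑ i ∈ d.support, F (i + 0) (d - Finsupp.single i 1)
  | (m + 2) => (∑ i ∈ d.support, F (i + m + 1) (d - Finsupp.single i 1))
      + (1 / 2 : ℂ) * ∑ j ∈ Finset.range (m + 1),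
          ∑ p ∈ (Finset.HasAntidiagonal.antidiagonal d).filter (fun p => p.1 ≠ 0 ∧ p.2 ≠ 0),
            F j p.1 * F (m - j) p.2

lemma step_congr {F G : ℕ → (ℕ →₀ ℕ) → ℂ} (n : ℕ) (d : ℕ →₀ ℕ)
    (h : ∀ j (e : ℕ →₀ ℕ), deg e < deg d → F j e = G j e) :
    step F n d = step G n d := by
  match n with
  | 0 =>
    simp only [step]
    congr 1
    apply Finset.sum_congr rfl
    intro i hi
    exact h _ _ (deg_sub_lt (Finset.mem_filter.mp hi).1)
  | 1 =>
    simp only [step]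
    exact Finset.sum_congr rfl fun i hi => h _ _ (deg_sub_lt hi)
  | (m + 2) =>
    simp only [step]
    congr 1
    · exact Finset.sum_congr rfl fun i hi => h _ _ (deg_sub_lt hi)
    · congr 1
      apply Finset.sum_congr rfl
      intro j _
      apply Finset.sum_congr rfl
      intro p hp
      obtain ⟨hp1, hne⟩ := Finset.mem_filter.mp hp
      obtain ⟨l1, l2⟩ := deg_antidiagonal hp1 hne.1 hne.2
      rw [h _ _ l1, h _ _ l2]

lemma coeff_X0sq_zero :
    MvPowerSeries.coeff (0 : ℕ →₀ ℕ)
      (((1 : ℂ) / 2) • (MvPowerSeries.X 0 : MvPowerSeries ℕ ℂ) ^ 2) = 0 := by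
  rw [map_smul, pow_two, coeff_X_mul']
  simp

lemma step_zero (F : ℕ → (ℕ →₀ ℕ) → ℂ) (n : ℕ) : step F n 0 = 0 := by
  match n with
  | 0 => simp [step, coeff_X0sq_zero]
  | 1 => simp [step]
  | (m + 2) =>
    simp only [step]
    rw [Finset.sum_eq_zero, Finset.sum_eq_zero]
    · simp
    · intro j _
      apply Finset.sum_eq_zero
      intro p hp
      obtain ⟨hp1, hne⟩ := Finset.mem_filter.mp hp
      rw [Finset.HasAntidiagonal.mem_antidiagonal] at hp1
      refine absurd ?_ hne.1
      ext a
      have h := DFunLike.congr_fun hp1 a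
      simp only [Finsupp.add_apply, Finsupp.coe_zero, Pi.zero_apply] at h ⊢
      omega
    · simp

def Wk : ℕ → ℕ → (ℕ →₀ ℕ) → ℂ
  | 0 => fun _ _ => 0
  | (k + 1) => step (Wk k)

lemma Wk_stable : ∀ (N : ℕ) (d : ℕ →₀ ℕ), deg d ≤ N → ∀ (n k k' : ℕ),
    deg d < k → deg d < k' → Wk k n d = Wk k' n d := by
  intro N
  induction N with
  | zero =>
    intro d hd n k k' hk hk'
    obtain ⟨k, rfl⟩ : ∃ a, k = a + 1 := ⟨k - 1, by omega⟩
    obtain ⟨k', rfl⟩ : ∃ a, k' = a + 1 := ⟨k' - 1, by omega⟩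
    have : d = 0 := deg_eq_zero (by omega)
    subst this
    show step (Wk k) n 0 = step (Wk k') n 0
    rw [step_zero, step_zero]
  | succ N ih =>
    intro d hd n k k' hk hk'
    obtain ⟨k, rfl⟩ : ∃ a, k = a + 1 := ⟨k - 1, by omega⟩
    obtain ⟨k', rfl⟩ : ∃ a, k' = a + 1 := ⟨k' - 1, by omega⟩
    show step (Wk k) n d = step (Wk k') n d
    apply step_congr
    intro j e he
    exact ih e (by omega) j k k' (by omega) (by omega)

def wsol : ℕ → MvPowerSeries ℕ ℂ := fun n => fun d => Wk (deg d + 1) n d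

lemma coeff_wsol (n : ℕ) (d : ℕ →₀ ℕ) :
    MvPowerSeries.coeff d (wsol n) = Wk (deg d + 1) n d := rfl

lemma coeff_wsol_step (n : ℕ) (d : ℕ →₀ ℕ) :
    MvPowerSeries.coeff d (wsol n) =
      step (fun j e => MvPowerSeries.coeff e (wsol j)) n d := by
  rw [coeff_wsol]
  show step (Wk (deg d)) n d = _
  apply step_congr
  intro j e he
  rw [coeff_wsol]
  exact Wk_stable (deg e) e le_rfl j _ _ he (by omega)


lemma tsum_cXmul0 (g : ℕ → MvPowerSeries ℕ ℂ) (d : ℕ →₀ ℕ) :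
    ∑' j : ℕ, MvPowerSeries.coeff d (MvPowerSeries.X j * g j) =
      ∑ i ∈ d.support, MvPowerSeries.coeff (d - Finsupp.single i 1) (g i) := by
  have h := tsum_cXmul 0 g d
  simp only [Nat.add_zero, Nat.sub_zero] at h
  rw [h, Finset.filter_true_of_mem (fun i _ => Nat.zero_le i)]

def SysD (w : ℕ → MvPowerSeries ℕ ℂ) : Prop :=
  (∀ d : ℕ →₀ ℕ, MvPowerSeries.coeff d (w 0) =
      MvPowerSeries.coeff d
        (((1 : ℂ) / 2) • (MvPowerSeries.X 0 : MvPowerSeries ℕ ℂ) ^ 2)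
      + ∑' j : ℕ, MvPowerSeries.coeff d (MvPowerSeries.X (j + 1) * w j)) ∧
  (∀ d : ℕ →₀ ℕ, MvPowerSeries.coeff d (w 1) =
      ∑' j : ℕ, MvPowerSeries.coeff d (MvPowerSeries.X j * w j)) ∧
  (∀ m : ℕ, ∀ d : ℕ →₀ ℕ, MvPowerSeries.coeff d (w (m + 2)) =
      (∑' j : ℕ, MvPowerSeries.coeff d (MvPowerSeries.X j * w (j + m + 1)))
      + (1 / 2) * ∑ j ∈ Finset.range (m + 1),
          MvPowerSeries.coeff d (w j * w (m - j)))

def stepEq (w : ℕ → MvPowerSeries ℕ ℂ) : Prop :=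
  ∀ n d, MvPowerSeries.coeff d (w n) =
    step (fun j e => MvPowerSeries.coeff e (w j)) n d

lemma prod_filter (w : ℕ → MvPowerSeries ℕ ℂ)
    (h0 : ∀ n, MvPowerSeries.coeff 0 (w n) = 0) (j k : ℕ) (d : ℕ →₀ ℕ) :
    MvPowerSeries.coeff d (w j * w k) =
      ∑ p ∈ (Finset.HasAntidiagonal.antidiagonal d).filter (fun p => p.1 ≠ 0 ∧ p.2 ≠ 0),
        MvPowerSeries.coeff p.1 (w j) * MvPowerSeries.coeff p.2 (w k) := by
  rw [MvPowerSeries.coeff_mul]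
  refine (Finset.sum_filter_of_ne ?_).symm
  intro p hp hne
  refine ⟨fun h1 => hne ?_, fun h2 => hne ?_⟩
  · rw [h1, h0 j, zero_mul]
  · rw [h2, h0 k, mul_zero]

lemma sysD_const_zero {w : ℕ → MvPowerSeries ℕ ℂ} (h : SysD w) :
    ∀ n, MvPowerSeries.coeff 0 (w n) = 0 := by
  intro n
  induction n using Nat.strong_induction_on with
  | _ n ih =>
  match n with
  | 0 =>
    rw [h.1 0, tsum_cXmul 1 w 0, coeff_X0sq_zero]
    simp
  | 1 =>
    rw [h.2.1 0, tsum_cXmul0 w 0]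
    simp
  | (m + 2) =>
    rw [h.2.2 m 0, tsum_cXmul0 (fun j => w (j + m + 1)) 0]
    have hA : ∑ i ∈ (0 : ℕ →₀ ℕ).support,
        MvPowerSeries.coeff ((0 : ℕ →₀ ℕ) - Finsupp.single i 1) (w (i + m + 1)) = 0 := by
      simp
    have hB : ∑ j ∈ Finset.range (m + 1),
        MvPowerSeries.coeff (0 : ℕ →₀ ℕ) (w j * w (m - j)) = 0 := by
      apply Finset.sum_eq_zero
      intro j hj
      rw [MvPowerSeries.coeff_mul, Finsupp.antidiagonal_zero, Finset.sum_singleton]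
      exact mul_eq_zero_of_left (ih j (by have := Finset.mem_range.mp hj; omega)) _
    rw [hA, hB, mul_zero, zero_add]

lemma stepEq_const_zero {w : ℕ → MvPowerSeries ℕ ℂ} (h : stepEq w) (n : ℕ) :
    MvPowerSeries.coeff 0 (w n) = 0 := by
  rw [h n 0, step_zero]

lemma rhs0 (w : ℕ → MvPowerSeries ℕ ℂ) (d : ℕ →₀ ℕ) :
    MvPowerSeries.coeff d
        (((1 : ℂ) / 2) • (MvPowerSeries.X 0 : MvPowerSeries ℕ ℂ) ^ 2)
      + (∑' j : ℕ, MvPowerSeries.coeff d (MvPowerSeries.X (j + 1) * w j)) =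
      step (fun j e => MvPowerSeries.coeff e (w j)) 0 d := by
  rw [tsum_cXmul 1 w d]
  rfl

lemma rhs1 (w : ℕ → MvPowerSeries ℕ ℂ) (d : ℕ →₀ ℕ) :
    (∑' j : ℕ, MvPowerSeries.coeff d (MvPowerSeries.X j * w j)) =
      step (fun j e => MvPowerSeries.coeff e (w j)) 1 d := by
  rw [tsum_cXmul0 w d]
  rfl

lemma rhs2 (w : ℕ → MvPowerSeries ℕ ℂ)
    (h0 : ∀ n, MvPowerSeries.coeff 0 (w n) = 0) (m : ℕ) (d : ℕ →₀ ℕ) :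
    (∑' j : ℕ, MvPowerSeries.coeff d (MvPowerSeries.X j * w (j + m + 1)))
      + (1 / 2) * ∑ j ∈ Finset.range (m + 1),
          MvPowerSeries.coeff d (w j * w (m - j)) =
      step (fun j e => MvPowerSeries.coeff e (w j)) (m + 2) d := by
  rw [tsum_cXmul0 (fun j => w (j + m + 1)) d,
    Finset.sum_congr rfl (fun j _ => prod_filter w h0 j (m - j) d)]
  rfl

lemma sysD_iff_stepEq (w : ℕ → MvPowerSeries ℕ ℂ) : SysD w ↔ stepEq w := by
  constructor
  · intro h
    have h0 := sysD_const_zero h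
    intro n d
    match n with
    | 0 => rw [h.1 d, rhs0]
    | 1 => rw [h.2.1 d, rhs1]
    | (m + 2) => rw [h.2.2 m d, rhs2 w h0]
  · intro h
    have h0 := stepEq_const_zero h
    exact ⟨fun d => (h 0 d).trans (rhs0 w d).symm,
      fun d => (h 1 d).trans (rhs1 w d).symm,
      fun m d => (h (m + 2) d).trans (rhs2 w h0 m d).symm⟩

lemma stepEq_unique {w w' : ℕ → MvPowerSeries ℕ ℂ} (h : stepEq w) (h' : stepEq w') :
    w = w' := by
  have key : ∀ (N : ℕ) (d : ℕ →₀ ℕ), deg d ≤ N → ∀ n,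
      MvPowerSeries.coeff d (w n) = MvPowerSeries.coeff d (w' n) := by
    intro N
    induction N with
    | zero =>
      intro d hd n
      have : d = 0 := deg_eq_zero (by omega)
      subst this
      rw [h n 0, h' n 0, step_zero, step_zero]
    | succ N ih =>
      intro d hd n
      rw [h n d, h' n d]
      exact step_congr n d fun j e he => ih e (by omega) j
  funext n
  exact MvPowerSeries.ext fun d => key (deg d) d le_rfl n

lemma stepEq_wsol : stepEq wsol := coeff_wsol_step


def xcD : ℕ → MvPowerSeries ℕ ℂ := fun a =>
  (if a = 1 then 1 else 0) - MvPowerSeries.X a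

def negD : (ℕ → MvPowerSeries ℕ ℂ) → ℕ → (ℕ →₀ ℕ) → ℂ := fun w m d =>
  (if m = 0 then
      MvPowerSeries.coeff d ((MvPowerSeries.X 0 : MvPowerSeries ℕ ℂ) ^ 2)
    else 0)
  - 2 * ∑' p : ℕ × ℕ,
      (if p.1 + m = p.2 + 1 then MvPowerSeries.coeff d (xcD p.1 * w p.2) else 0)
  + ∑' p : ℕ × ℕ,
      (if p.1 + p.2 + 2 = m then MvPowerSeries.coeff d (w p.1 * w p.2) else 0)

lemma coeff_xcD_mul (w : ℕ → MvPowerSeries ℕ ℂ) (a b : ℕ) (d : ℕ →₀ ℕ) :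
    MvPowerSeries.coeff d (xcD a * w b) =
      (if a = 1 then MvPowerSeries.coeff d (w b) else 0)
        - MvPowerSeries.coeff d (MvPowerSeries.X a * w b) := by
  rw [xcD, sub_mul, map_sub]
  congr 1
  by_cases h : a = 1
  · rw [if_pos h, if_pos h, one_mul]
  · rw [if_neg h, if_neg h, zero_mul, map_zero]

lemma diag0 (w : ℕ → MvPowerSeries ℕ ℂ) (d : ℕ →₀ ℕ) :
    (∑' p : ℕ × ℕ,
        (if p.1 + 0 = p.2 + 1 then MvPowerSeries.coeff d (xcD p.1 * w p.2) else 0)) =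
      MvPowerSeries.coeff d (w 0)
        - ∑ i ∈ d.support.filter (fun i => 1 ≤ i),
            MvPowerSeries.coeff (d - Finsupp.single i 1) (w (i - 1)) := by
  rw [← Function.Injective.tsum_eq (g := fun b : ℕ => (b + 1, b))
    (fun a b hab => by simpa using congrArg Prod.snd hab)
    (by
      intro p hp
      simp only [Function.mem_support] at hp
      have hc : p.1 + 0 = p.2 + 1 := by by_contra hc; exact hp (if_neg hc)
      exact ⟨p.2, by ext <;> simp <;> omega⟩)]
  have h1 : ∀ b : ℕ, (if (b + 1) + 0 = b + 1 then
      MvPowerSeries.coeff d (xcD (b + 1) * w b) else 0) =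
      (if b = 0 then MvPowerSeries.coeff d (w 0) else 0)
        - MvPowerSeries.coeff d (MvPowerSeries.X (b + 1) * w b) := by
    intro b
    rw [if_pos rfl, coeff_xcD_mul]
    congr 1
    by_cases h : b = 0
    · subst h; rw [if_pos rfl, if_pos rfl]
    · rw [if_neg (by omega), if_neg h]
  rw [tsum_congr h1, Summable.tsum_sub (summable_of_ne_finset_zero (s := {0})
      (fun b hb => if_neg (by simpa using hb)))
      (summable_cXmul 1 w d),
    tsum_ite_eq 0 (fun _ => MvPowerSeries.coeff d (w 0)), tsum_cXmul 1 w d]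

lemma diagS (w : ℕ → MvPowerSeries ℕ ℂ) (k : ℕ) (d : ℕ →₀ ℕ) :
    (∑' p : ℕ × ℕ,
        (if p.1 + (k + 1) = p.2 + 1 then MvPowerSeries.coeff d (xcD p.1 * w p.2) else 0)) =
      MvPowerSeries.coeff d (w (k + 1))
        - ∑ i ∈ d.support,
            MvPowerSeries.coeff (d - Finsupp.single i 1) (w (i + k)) := by
  rw [← Function.Injective.tsum_eq (g := fun a : ℕ => (a, a + k))
    (fun a b hab => by simpa using congrArg Prod.fst hab)
    (by
      intro p hp
      simp only [Function.mem_support] at hp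
      have hc : p.1 + (k + 1) = p.2 + 1 := by by_contra hc; exact hp (if_neg hc)
      exact ⟨p.1, by ext <;> simp <;> omega⟩)]
  have h1 : ∀ a : ℕ, (if a + (k + 1) = (a + k) + 1 then
      MvPowerSeries.coeff d (xcD a * w (a + k)) else 0) =
      (if a = 1 then MvPowerSeries.coeff d (w (k + 1)) else 0)
        - MvPowerSeries.coeff d (MvPowerSeries.X a * w (a + k)) := by
    intro a
    rw [if_pos (by omega), coeff_xcD_mul]
    congr 1
    by_cases h : a = 1
    · subst h; rw [if_pos rfl, if_pos rfl, Nat.add_comm 1 k]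
    · rw [if_neg h, if_neg h]
  rw [tsum_congr h1, Summable.tsum_sub (summable_of_ne_finset_zero (s := {1})
      (fun b hb => if_neg (by simpa using hb)))
      (show Summable (fun b : ℕ =>
          MvPowerSeries.coeff d (MvPowerSeries.X b * w (b + k))) from
        summable_cXmul 0 _ d),
    tsum_ite_eq 1 (fun _ => MvPowerSeries.coeff d (w (k + 1))), tsum_cXmul0 (fun a => w (a + k)) d]

lemma ptsum01 (w : ℕ → MvPowerSeries ℕ ℂ) (m : ℕ) (hm : m < 2) (d : ℕ →₀ ℕ) :
    (∑' p : ℕ × ℕ,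
        (if p.1 + p.2 + 2 = m then MvPowerSeries.coeff d (w p.1 * w p.2) else 0)) = 0 := by
  rw [tsum_congr (fun p : ℕ × ℕ => if_neg (by omega)), tsum_zero]

lemma ptsum2 (w : ℕ → MvPowerSeries ℕ ℂ) (m : ℕ) (d : ℕ →₀ ℕ) :
    (∑' p : ℕ × ℕ,
        (if p.1 + p.2 + 2 = m + 2 then MvPowerSeries.coeff d (w p.1 * w p.2) else 0)) =
      ∑ j ∈ Finset.range (m + 1), MvPowerSeries.coeff d (w j * w (m - j)) := by
  rw [tsum_eq_sum (s := (Finset.range (m + 1)).image (fun j => (j, m - j)))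
    (by
      intro p hp
      rw [if_neg]
      intro hc
      obtain ⟨a, b⟩ := p
      simp only at hc
      exact hp (Finset.mem_image.mpr ⟨a, Finset.mem_range.mpr (by omega),
        by simp; omega⟩))]
  rw [Finset.sum_image (by
    intro x hx y hy hxy
    simpa using congrArg Prod.fst hxy)]
  apply Finset.sum_congr rfl
  intro j hj
  rw [if_pos (by have := Finset.mem_range.mp hj; omega)]


lemma neg0_iff (w : ℕ → MvPowerSeries ℕ ℂ) (d : ℕ →₀ ℕ) :
    negD w 0 d = 0 ↔
      MvPowerSeries.coeff d (w 0) =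
        MvPowerSeries.coeff d
          (((1 : ℂ) / 2) • (MvPowerSeries.X 0 : MvPowerSeries ℕ ℂ) ^ 2)
        + ∑' j : ℕ, MvPowerSeries.coeff d (MvPowerSeries.X (j + 1) * w j) := by
  rw [tsum_cXmul 1 w d, map_smul, smul_eq_mul]
  simp only [negD, reduceIte]
  rw [diag0 w d, ptsum01 w 0 (by omega) d]
  constructor
  · intro h; linear_combination (-(1 : ℂ)/2) * h
  · intro h; linear_combination (-2 : ℂ) * h

lemma neg1_iff (w : ℕ → MvPowerSeries ℕ ℂ) (d : ℕ →₀ ℕ) :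
    negD w 1 d = 0 ↔
      MvPowerSeries.coeff d (w 1) =
        ∑' j : ℕ, MvPowerSeries.coeff d (MvPowerSeries.X j * w j) := by
  rw [tsum_cXmul0 w d]
  simp only [negD, if_neg one_ne_zero]
  have hd := diagS w 0 d
  simp only [Nat.zero_add, Nat.add_zero] at hd
  rw [hd, ptsum01 w 1 (by omega) d]
  constructor
  · intro h; linear_combination (-(1 : ℂ)/2) * h
  · intro h; linear_combination (-2 : ℂ) * h

lemma neg2_iff (w : ℕ → MvPowerSeries ℕ ℂ) (m : ℕ) (d : ℕ →₀ ℕ) :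
    negD w (m + 2) d = 0 ↔
      MvPowerSeries.coeff d (w (m + 2)) =
        (∑' j : ℕ, MvPowerSeries.coeff d (MvPowerSeries.X j * w (j + m + 1)))
        + (1 / 2) * ∑ j ∈ Finset.range (m + 1),
            MvPowerSeries.coeff d (w j * w (m - j)) := by
  rw [tsum_cXmul0 (fun j => w (j + m + 1)) d]
  simp only [negD, if_neg (by omega : ¬ m + 2 = 0)]
  have hd := diagS w (m + 1) d
  simp only [show m + 1 + 1 = m + 2 from rfl, ← Nat.add_assoc] at hd
  have hcg : ∀ p : ℕ × ℕ,
      (if p.1 + (m + 2) = p.2 + 1 then MvPowerSeries.coeff d (xcD p.1 * w p.2) else 0) =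
      (if p.1 + m + 2 = p.2 + 1 then MvPowerSeries.coeff d (xcD p.1 * w p.2) else 0) :=
    fun p => if_congr (by omega) rfl rfl
  rw [tsum_congr hcg, hd, ptsum2 w m d]
  constructor
  · intro h; linear_combination (-(1 : ℂ)/2) * h
  · intro h; linear_combination (-2 : ℂ) * h

lemma negAll_iff_sysD (w : ℕ → MvPowerSeries ℕ ℂ) :
    (∀ m d, negD w m d = 0) ↔ SysD w := by
  constructor
  · intro h
    exact ⟨fun d => (neg0_iff w d).mp (h 0 d), fun d => (neg1_iff w d).mp (h 1 d),
      fun m d => (neg2_iff w m d).mp (h (m + 2) d)⟩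
  · rintro ⟨h1, h2, h3⟩ m d
    match m with
    | 0 => exact (neg0_iff w d).mpr (h1 d)
    | 1 => exact (neg1_iff w d).mpr (h2 d)
    | (m + 2) => exact (neg2_iff w m d).mpr (h3 m d)

theorem final :
    (∃! w : ℕ → MvPowerSeries ℕ ℂ, ∀ m d, negD w m d = 0) ∧
    (∀ w : ℕ → MvPowerSeries ℕ ℂ, (∀ m d, negD w m d = 0) ↔ SysD w) := by
  constructor
  · refine ⟨wsol, ?_, ?_⟩
    · exact (negAll_iff_sysD wsol).mpr ((sysD_iff_stepEq wsol).mpr stepEq_wsol)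
    · intro y hy
      exact stepEq_unique ((sysD_iff_stepEq y).mp ((negAll_iff_sysD y).mp hy)) stepEq_wsol
  · exact negAll_iff_sysD

end
end AiryAux

/-- There exists a unique sequence `(wₙ)` of formal power series in `v₀, v₁, ...` such that
`x = f - Σ_{n≥0} vₙ f^{2n-1} - Σ_{n≥0} wₙ f^{-2n-3}` satisfies `(x²)₋ = 0`, i.e. every
coefficient of a negative power `f^{-2m-2}` of `f` in `x²` vanishes.  Moreover this
condition is equivalent to the recursive system
`w₀ = v₀²/2 + Σ_{j≥1} vⱼ w_{j-1}`, `w₁ = Σ_{j≥0} vⱼ wⱼ`,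
`wₘ = Σ_{j≥0} vⱼ w_{j+m-1} + (1/2) Σ_{j=0}^{m-2} wⱼ w_{m-2-j}` for `m ≥ 2`
(which determines the `wₙ` recursively from `w₀⁽²⁾ = v₀²/2`). -/
theorem airy_special_deformation_unique :
    -- coefficient of `f^{2a-1}` in `x` is `δ_{a,1} - v_a`
    let xc : ℕ → MvPowerSeries ℕ ℂ := fun a =>
      (if a = 1 then 1 else 0) - MvPowerSeries.X a
    -- coefficient of `f^{-2m-2}` in `x²`, evaluated on the monomial `d`
    let negCoeff : (ℕ → MvPowerSeries ℕ ℂ) → ℕ → (ℕ →₀ ℕ) → ℂ := fun w m d =>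
      (if m = 0 then
          MvPowerSeries.coeff d ((MvPowerSeries.X 0 : MvPowerSeries ℕ ℂ) ^ 2)
        else 0)
      - 2 * ∑' p : ℕ × ℕ,
          (if p.1 + m = p.2 + 1 then MvPowerSeries.coeff d (xc p.1 * w p.2) else 0)
      + ∑' p : ℕ × ℕ,
          (if p.1 + p.2 + 2 = m then MvPowerSeries.coeff d (w p.1 * w p.2) else 0)
    let Sys : (ℕ → MvPowerSeries ℕ ℂ) → Prop := fun w =>
      (∀ d : ℕ →₀ ℕ, MvPowerSeries.coeff d (w 0) =
          MvPowerSeries.coeff d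
            (((1 : ℂ) / 2) • (MvPowerSeries.X 0 : MvPowerSeries ℕ ℂ) ^ 2)
          + ∑' j : ℕ, MvPowerSeries.coeff d (MvPowerSeries.X (j + 1) * w j)) ∧
      (∀ d : ℕ →₀ ℕ, MvPowerSeries.coeff d (w 1) =
          ∑' j : ℕ, MvPowerSeries.coeff d (MvPowerSeries.X j * w j)) ∧
      (∀ m : ℕ, ∀ d : ℕ →₀ ℕ, MvPowerSeries.coeff d (w (m + 2)) =
          (∑' j : ℕ, MvPowerSeries.coeff d (MvPowerSeries.X j * w (j + m + 1)))
          + (1 / 2) * ∑ j ∈ Finset.range (m + 1),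
              MvPowerSeries.coeff d (w j * w (m - j)))
    (∃! w : ℕ → MvPowerSeries ℕ ℂ, ∀ m d, negCoeff w m d = 0) ∧
    (∀ w : ℕ → MvPowerSeries ℕ ℂ, (∀ m d, negCoeff w m d = 0) ↔ Sys w) := by
  intro xc negCoeff Sys
  exact AiryAux.final
end

section
/- With σ_n(φ_0) as above, σ_1(φ_0) · (2n-1)!! σ_n(φ_0) = (2n+1)!! σ_{n+1}(φ_0) - u_0 · (2n-1)!! σ_n(φ_0) + ((2n-1)!!/(n+1)!) u_0^{n+1} for all n ≥ 0. -/
open Polynomial Nat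

lemma dfac_ne' (k : ℕ) : ((k‼ : ℚ)) ≠ 0 := by
  exact_mod_cast (Nat.doubleFactorial_pos k).ne'

lemma fac_ne' (k : ℕ) : ((k ! : ℚ)) ≠ 0 := by
  exact_mod_cast (Nat.factorial_pos k).ne'

lemma dfac_odd_succ' (j : ℕ) : (2*j+1)‼ = (2*j+1) * (2*j-1)‼ := by
  cases j with
  | zero => rfl
  | succ j =>
    have h1 : 2*(j+1)+1 = (2*j+1)+2 := by omega
    have h2 : 2*(j+1)-1 = 2*j+1 := by omega
    rw [h1, h2, Nat.doubleFactorial_add_two]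

lemma rat_id' (a b f x y : ℚ) (hb : b ≠ 0) (hf : f ≠ 0)
    (hy : 2*y+1 ≠ 0) (hx : x - y ≠ 0) :
    a * (1 / (b * ((x - y) * f))) + (a * (1 / ((2*y+1) * b * f)) + a * (1 / ((2*y+1) * b * f)))
      = (2*x+1) * a * (1 / ((2*y+1) * b * ((x - y) * f))) := by
  field_simp
  have hy2 : (1 + y*2) ≠ 0 := by intro h; apply hy; linarith
  linear_combination (-a) * mul_inv_cancel₀ hy2

lemma mid_coeff' (n j : ℕ) (h : j < n) :
    ((2*n-1)‼ : ℚ) * ((1:ℚ) / (((2*j-1)‼ : ℚ) * ((n-j)! : ℚ)))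
      + (((2*n-1)‼ : ℚ) * ((1:ℚ) / (((2*(j+1)-1)‼ : ℚ) * ((n-(j+1))! : ℚ)))
        + ((2*n-1)‼ : ℚ) * ((1:ℚ) / (((2*(j+1)-1)‼ : ℚ) * ((n-(j+1))! : ℚ))))
      = ((2*n+1)‼ : ℚ) * ((1:ℚ) / (((2*(j+1)-1)‼ : ℚ) * ((n+1-(j+1))! : ℚ))) := by
  have h1 : 2*(j+1)-1 = 2*j+1 := by omega
  have h3 : n + 1 - (j+1) = n - j := by omega
  have h4 : n - j = (n - (j+1)) + 1 := by omega
  rw [h1, dfac_odd_succ' n, h3, h4, dfac_odd_succ', Nat.factorial_succ]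
  have hm : ((n - (j+1) : ℕ) : ℚ) + 1 = (n : ℚ) - (j : ℚ) := by
    push_cast [Nat.cast_sub h]; ring
  push_cast [hm]
  have hy : 2*(j:ℚ)+1 ≠ 0 := by positivity
  have hx : (n:ℚ) - (j:ℚ) ≠ 0 := by
    have : (j:ℚ) < n := by exact_mod_cast h
    intro hc; nlinarith
  exact rat_id' _ _ _ _ _ (dfac_ne' _) (fac_ne' _) hy hx

lemma top_coeff' (n : ℕ) :
    ((2*n-1)‼ : ℚ) * ((1:ℚ) / (((2*n-1)‼ : ℚ) * ((n-n)! : ℚ)))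
      = ((2*n+1)‼ : ℚ) * ((1:ℚ) / (((2*(n+1)-1)‼ : ℚ) * ((n+1-(n+1))! : ℚ))) := by
  have h1 : 2*(n+1)-1 = 2*n+1 := by omega
  rw [h1, Nat.sub_self, Nat.sub_self, Nat.factorial_zero]
  rw [mul_one_div, mul_one_div, Nat.cast_one, mul_one, mul_one,
    div_self (dfac_ne' _), div_self (dfac_ne' _)]

lemma bot_coeff' (n : ℕ) :
    ((2*n-1)‼ : ℚ) * ((1:ℚ) / (((2*0-1)‼ : ℚ) * ((n-0)! : ℚ)))
      + ((2*n-1)‼ : ℚ) * ((1:ℚ) / (((2*0-1)‼ : ℚ) * ((n-0)! : ℚ)))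
      = ((2*n+1)‼ : ℚ) * ((1:ℚ) / (((2*0-1)‼ : ℚ) * ((n+1-0)! : ℚ)))
        + ((2*n-1)‼ : ℚ) / ((n+1)! : ℚ) := by
  have h0 : (2*0-1)‼ = 1 := rfl
  rw [h0, dfac_odd_succ' n, Nat.sub_zero, Nat.sub_zero]
  have h1 : (n+1)! = (n+1) * n ! := Nat.factorial_succ n
  rw [h1]
  have := fac_ne' n
  have hn1 : ((n:ℚ)+1) ≠ 0 := by positivity
  push_cast
  field_simp
  ring

/-- With `σₙ(φ₀) = Σ_{j=0}^n x^{2j} u₀^{n-j}/((2j-1)‼ (n-j)!)` (in `ℚ[x][u₀]`, `u₀` the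
outer variable, so `σ₁(φ₀) = x² + u₀`), for all `n ≥ 0`:
`σ₁(φ₀) · (2n-1)‼ σₙ(φ₀) = (2n+1)‼ σ_{n+1}(φ₀) - u₀ · (2n-1)‼ σₙ(φ₀)
  + ((2n-1)‼/(n+1)!) u₀^{n+1}`. -/
theorem descendant_sigma1_recursion :
    let A := Polynomial (Polynomial ℚ)
    let u₀ : A := Polynomial.X
    let σ : ℕ → A := fun n =>
      ∑ j ∈ Finset.range (n + 1),
        ((1 : ℚ) / (((2 * j - 1)‼ : ℚ) * ((n - j)! : ℚ))) •
          (Polynomial.C (Polynomial.X ^ (2 * j)) * Polynomial.X ^ (n - j))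
    ∀ n : ℕ,
      σ 1 * (((2 * n - 1)‼ : ℚ) • σ n) =
        ((2 * n + 1)‼ : ℚ) • σ (n + 1) - u₀ * (((2 * n - 1)‼ : ℚ) • σ n)
          + (((2 * n - 1)‼ : ℚ) / ((n + 1)! : ℚ)) • u₀ ^ (n + 1) := by
  intro A u₀ σ n
  have hσ1 : σ 1 = Polynomial.C (Polynomial.X ^ 2) + Polynomial.X := by
    simp only [σ]
    rw [Finset.sum_range_succ, Finset.sum_range_one]
    norm_num [Nat.doubleFactorial]
    exact add_comm _ _
  set K : ℕ → A := fun j => Polynomial.C (Polynomial.X ^ (2*j)) * Polynomial.X ^ (n+1-j)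
    with hKdef
  set q : ℕ → ℚ := fun j => ((2*n-1)‼ : ℚ) * ((1:ℚ) / (((2*j-1)‼ : ℚ) * ((n-j)! : ℚ)))
    with hqdef
  set r : ℕ → ℚ := fun j => ((2*n+1)‼ : ℚ) * ((1:ℚ) / (((2*j-1)‼ : ℚ) * ((n+1-j)! : ℚ)))
    with hrdef
  have hexp : ∀ (m : ℕ) (c : ℚ), c • σ m = ∑ j ∈ Finset.range (m+1),
      (c * ((1:ℚ) / (((2*j-1)‼ : ℚ) * ((m-j)! : ℚ)))) •
        (Polynomial.C (Polynomial.X ^ (2*j)) * Polynomial.X ^ (m-j)) := by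
    intro m c
    simp only [σ, Finset.smul_sum, smul_smul]
  have hCS : Polynomial.C (Polynomial.X ^ 2) * (((2*n-1)‼ : ℚ) • σ n)
      = ∑ j ∈ Finset.range (n+1), q j • K (j+1) := by
    rw [hexp, Finset.mul_sum]
    refine Finset.sum_congr rfl fun j hj => ?_
    rw [mul_smul_comm]
    refine congrArg (q j • ·) ?_
    simp only [hKdef]
    have h1 : n + 1 - (j+1) = n - j := by omega
    have h2 : 2*(j+1) = 2 + 2*j := by omega
    rw [h1, h2, ← mul_assoc, ← Polynomial.C_mul, ← pow_add]
  have hXS : Polynomial.X * (((2*n-1)‼ : ℚ) • σ n)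
      = ∑ j ∈ Finset.range (n+1), q j • K j := by
    rw [hexp, Finset.mul_sum]
    refine Finset.sum_congr rfl fun j hj => ?_
    rw [mul_smul_comm]
    refine congrArg (q j • ·) ?_
    simp only [hKdef]
    have h1 : n + 1 - j = (n - j) + 1 := by
      have := Finset.mem_range.mp hj; omega
    rw [h1, pow_succ]
    ring
  have hB : ((2*n+1)‼ : ℚ) • σ (n+1) = ∑ j ∈ Finset.range (n+2), r j • K j := by
    rw [hexp]
  have hK0 : (u₀ : A) ^ (n+1) = K 0 := by
    simp only [hKdef, u₀]
    norm_num
  -- key identity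
  have key : Polynomial.C (Polynomial.X ^ 2) * (((2*n-1)‼ : ℚ) • σ n)
      + (Polynomial.X * (((2*n-1)‼ : ℚ) • σ n) + Polynomial.X * (((2*n-1)‼ : ℚ) • σ n))
      = ((2*n+1)‼ : ℚ) • σ (n+1)
        + (((2*n-1)‼ : ℚ) / ((n+1)! : ℚ)) • (u₀ : A) ^ (n+1) := by
    rw [hCS, hXS, hB, hK0, ← Finset.sum_add_distrib]
    rw [Finset.sum_range_succ' (fun j => (q j • K j + q j • K j)) n]
    rw [Finset.sum_range_succ (fun j => q j • K (j+1)) n]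
    rw [Finset.sum_range_succ' (fun j => r j • K j) (n+1)]
    rw [Finset.sum_range_succ (fun j => r (j+1) • K (j+1)) n]
    have hsum : (∑ j ∈ Finset.range n, q j • K (j+1))
        + ∑ j ∈ Finset.range n, (q (j+1) • K (j+1) + q (j+1) • K (j+1))
        = ∑ j ∈ Finset.range n, r (j+1) • K (j+1) := by
      rw [← Finset.sum_add_distrib]
      refine Finset.sum_congr rfl fun j hj => ?_
      rw [← add_smul, ← add_smul]
      congr 1
      exact mid_coeff' n j (Finset.mem_range.mp hj)
    have e2 : q n • K (n+1) = r (n+1) • K (n+1) := by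
      rw [hqdef, hrdef]
      congr 1
      exact top_coeff' n
    have e3 : (q 0 • K 0 + q 0 • K 0)
        = r 0 • K 0 + (((2*n-1)‼ : ℚ) / ((n+1)! : ℚ)) • K 0 := by
      rw [← add_smul, ← add_smul]
      congr 1
      exact bot_coeff' n
    rw [e2] at *
    rw [e3, ← hsum]
    abel
  -- conclude
  rw [hσ1, add_mul, sub_add_eq_add_sub, eq_sub_iff_add_eq, add_assoc]
  exact key
end

section
/- Let f_n(x) = Σ_{j=0}^n ((2n-1)!!/((2j-1)!!(n-j)!)) x^{2j}. Then for all k ≥ j ≥ 1: f_j f_k = f_{j+k} - Σ_{l=1}^j ((2l-3)!!/l!) f_{j+k-l} + Σ_{l=1}^j ((2(k+l)-3)!!/(k+l)!) f_{j-l}. -/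
open Polynomial Nat

namespace DescAux

noncomputable def ff (n : ℕ) : Polynomial ℚ :=
  ∑ j ∈ Finset.range (n + 1),
    (((2 * n - 1)‼ : ℚ) / (((2 * j - 1)‼ : ℚ) * ((n - j)! : ℚ))) • Polynomial.X ^ (2 * j)

def cc (l : ℕ) : ℚ := ((2 * l - 3)‼ : ℚ) / (l ! : ℚ)

lemma ff_zero : ff 0 = 1 := by simp [ff]

lemma ff_one : ff 1 = X ^ 2 + 1 := by
  simp [ff, Finset.sum_range_succ, Nat.doubleFactorial]; ring

noncomputable def aa (n j : ℕ) : ℚ := ((2 * n - 1)‼ : ℚ) / (((2 * j - 1)‼ : ℚ) * ((n - j)! : ℚ))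

lemma ff_def (n : ℕ) : ff n = ∑ j ∈ Finset.range (n+1), aa n j • (X : ℚ[X]) ^ (2*j) := rfl

lemma df_ne (m : ℕ) : ((m‼ : ℚ)) ≠ 0 :=
  Nat.cast_ne_zero.mpr (Nat.doubleFactorial_pos m).ne'

lemma fact_ne (m : ℕ) : ((m ! : ℚ)) ≠ 0 := Nat.cast_ne_zero.mpr (Nat.factorial_ne_zero m)

lemma key_term (j m : ℕ) : aa (j+m+1+1) (j+1) = aa (j+m+1) j + 2 * aa (j+m+1) (j+1) := by
  rcases Nat.eq_zero_or_pos j with rfl | hj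
  · unfold aa
    have h0 : 2 * (0+1) - 1 = 1 := by omega
    have h1 : 2 * (0+m+1+1) - 1 = 2*m + 1 + 2 := by omega
    have h2 : 2 * (0+m+1) - 1 = 2*m + 1 := by omega
    have h4 : 2 * 0 - 1 = 0 := by omega
    have s1 : 0+m+1+1 - (0+1) = m+1 := by omega
    have s2 : 0+m+1 - 0 = m+1 := by omega
    have s3 : 0+m+1 - (0+1) = m := by omega
    rw [h0, h1, h2, h4, s1, s2, s3, Nat.doubleFactorial_add_two, Nat.factorial_succ]
    simp only [Nat.doubleFactorial]
    have p1 := df_ne (2*m+1)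
    have p3 := fact_ne m
    push_cast
    field_simp
    ring
  · obtain ⟨i, rfl⟩ : ∃ i, j = i + 1 := ⟨j - 1, by omega⟩
    unfold aa
    have h1 : 2 * (i+1+m+1+1) - 1 = (2*(i+m) + 3) + 2 := by omega
    have h2 : 2 * (i+1+m+1) - 1 = 2*(i+m) + 1 + 2 := by omega
    have h3 : 2 * (i+1+1) - 1 = (2*i+1) + 2 := by omega
    have h4 : 2 * (i+1) - 1 = 2*i + 1 := by omega
    have h5 : i+1+m+1+1 - (i+1+1) = m+1 := by omega
    have h6 : i+1+m+1 - (i+1) = m+1 := by omega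
    have h7 : i+1+m+1 - (i+1+1) = m := by omega
    rw [h1, h2, h3, h4, h5, h6, h7, Nat.doubleFactorial_add_two,
      Nat.doubleFactorial_add_two, Nat.doubleFactorial_add_two, Nat.factorial_succ]
    have p1 := df_ne (2*(i+m)+1)
    have p2 := df_ne (2*i+1)
    have p3 := fact_ne m
    push_cast
    field_simp
    ring

lemma key_const (n : ℕ) : aa (n+1) 0 = 2 * aa n 0 - cc (n+1) := by
  rcases Nat.eq_zero_or_pos n with rfl | hn
  · unfold aa cc; norm_num [Nat.doubleFactorial]
  · obtain ⟨i, rfl⟩ : ∃ i, n = i + 1 := ⟨n - 1, by omega⟩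
    unfold aa cc
    have h1 : 2*(i+1+1) - 1 = (2*i+1) + 2 := by omega
    have h2 : 2*(i+1) - 1 = 2*i + 1 := by omega
    have h3 : 2*(i+1+1) - 3 = 2*i + 1 := by omega
    have h4 : 2*0 - 1 = 0 := by omega
    rw [h1, h2, h3, h4, Nat.doubleFactorial_add_two]
    simp only [Nat.sub_zero, Nat.doubleFactorial, Nat.factorial_succ (i+1)]
    have p1 := df_ne (2*i+1)
    have p3 := fact_ne (i+1)
    push_cast
    field_simp
    ring

lemma aa_self (n : ℕ) : aa n n = 1 := by
  unfold aa
  simp only [Nat.sub_self, Nat.factorial_zero, Nat.cast_one, mul_one]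
  exact div_self (df_ne _)

lemma ff_one_mul (n : ℕ) : ff 1 * ff n = ff (n+1) - ff n + C (cc (n+1)) := by
  have key : ff (n+1) = X^2 * ff n + 2 * ff n - C (cc (n+1)) := by
    rw [ff_def, ff_def]
    have e1 : (X:ℚ[X])^2 * ∑ j ∈ Finset.range (n+1), aa n j • (X:ℚ[X]) ^ (2*j)
        = ∑ j ∈ Finset.range (n+1), aa n j • (X:ℚ[X]) ^ (2*(j+1)) := by
      rw [Finset.mul_sum]
      refine Finset.sum_congr rfl fun j _ => ?_
      rw [mul_smul_comm, ← pow_add]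
      ring_nf
    have e2 : (2 : ℚ[X]) * ∑ j ∈ Finset.range (n+1), aa n j • (X:ℚ[X]) ^ (2*j)
        = ∑ j ∈ Finset.range (n+1), (2 * aa n j) • (X:ℚ[X]) ^ (2*j) := by
      rw [Finset.mul_sum]
      refine Finset.sum_congr rfl fun j _ => ?_
      rw [mul_smul_comm, smul_eq_C_mul, smul_eq_C_mul, C_mul]
      have : (C (2:ℚ) : ℚ[X]) = 2 := map_ofNat C 2
      rw [this]
      ring
    rw [e1, e2]
    rw [Finset.sum_range_succ (fun j => aa (n+1) j • (X:ℚ[X]) ^ (2*j)),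
        Finset.sum_range_succ' (fun j => aa (n+1) j • (X:ℚ[X]) ^ (2*j)),
        Finset.sum_range_succ (fun j => aa n j • (X:ℚ[X]) ^ (2*(j+1))),
        Finset.sum_range_succ' (fun j => (2 * aa n j) • (X:ℚ[X]) ^ (2*j))]
    rw [aa_self (n+1), aa_self n]
    have e3 : ∀ j ∈ Finset.range n, aa (n+1) (j+1) • (X:ℚ[X]) ^ (2*(j+1))
        = aa n j • (X:ℚ[X]) ^ (2*(j+1)) + (2 * aa n (j+1)) • (X:ℚ[X]) ^ (2*(j+1)) := by
      intro j hj
      rw [Finset.mem_range] at hj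
      obtain ⟨m, rfl⟩ : ∃ m, n = j + m + 1 := ⟨n - j - 1, by omega⟩
      rw [key_term, add_smul]
    rw [Finset.sum_congr rfl e3, Finset.sum_add_distrib, key_const]
    simp only [mul_zero, pow_zero, smul_eq_C_mul, mul_one, C_sub, C_mul]
    ring
  rw [ff_one, key]
  ring

lemma const_sum (j k : ℕ) :
    ∑ l ∈ Finset.Icc 1 j, C (cc (k+l)) * (C (cc (j+1-l)) : ℚ[X])
      = ∑ l ∈ Finset.Icc 1 j, C (cc l) * (C (cc (j+k+1-l)) : ℚ[X]) := by
  refine Finset.sum_nbij' (i := fun l => j+1-l) (j := fun l => j+1-l) ?_ ?_ ?_ ?_ ?_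
  · intro a ha; simp only [Finset.mem_Icc] at ha ⊢; omega
  · intro a ha; simp only [Finset.mem_Icc] at ha ⊢; omega
  · intro a ha; simp only [Finset.mem_Icc] at ha; show j+1-(j+1-a) = a; omega
  · intro a ha; simp only [Finset.mem_Icc] at ha; show j+1-(j+1-a) = a; omega
  · intro a ha
    simp only [Finset.mem_Icc] at ha
    show C (cc (k+a)) * C (cc (j+1-a)) = C (cc (j+1-a)) * C (cc (j+k+1-(j+1-a)))
    have h2 : j+k+1-(j+1-a) = k+a := by omega
    rw [h2, mul_comm]

lemma main (j : ℕ) : ∀ k, ff j * ff k =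
    ff (j+k) - ∑ l ∈ Finset.Icc 1 j, cc l • ff (j+k-l)
      + ∑ l ∈ Finset.Icc 1 j, cc (k+l) • ff (j-l) := by
  induction j with
  | zero => intro k; simp [ff_zero]
  | succ j ih =>
    intro k
    have h1 : ff (j+1) * ff k = ff 1 * (ff j * ff k) + ff j * ff k - C (cc (j+1)) * ff k := by
      linear_combination (-(ff k)) * ff_one_mul j
    rw [h1, ih k]
    have eB : ff 1 * ∑ l ∈ Finset.Icc 1 j, cc l • ff (j+k-l)
        = ∑ l ∈ Finset.Icc 1 j, cc l • ff (j+k+1-l) - ∑ l ∈ Finset.Icc 1 j, cc l • ff (j+k-l)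
          + ∑ l ∈ Finset.Icc 1 j, cc l • C (cc (j+k+1-l)) := by
      rw [Finset.mul_sum, ← Finset.sum_sub_distrib, ← Finset.sum_add_distrib]
      refine Finset.sum_congr rfl fun l hl => ?_
      rw [Finset.mem_Icc] at hl
      rw [mul_smul_comm, ff_one_mul]
      have h : j+k-l+1 = j+k+1-l := by omega
      rw [h, smul_add, smul_sub]
    have eC : ff 1 * ∑ l ∈ Finset.Icc 1 j, cc (k+l) • ff (j-l)
        = ∑ l ∈ Finset.Icc 1 j, cc (k+l) • ff (j+1-l) - ∑ l ∈ Finset.Icc 1 j, cc (k+l) • ff (j-l)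
          + ∑ l ∈ Finset.Icc 1 j, cc (k+l) • C (cc (j+1-l)) := by
      rw [Finset.mul_sum, ← Finset.sum_sub_distrib, ← Finset.sum_add_distrib]
      refine Finset.sum_congr rfl fun l hl => ?_
      rw [Finset.mem_Icc] at hl
      rw [mul_smul_comm, ff_one_mul]
      have h : j-l+1 = j+1-l := by omega
      rw [h, smul_add, smul_sub]
    rw [mul_add, mul_sub, ff_one_mul (j+k), eB, eC]
    have hjk : j+1+k = j+k+1 := by omega
    rw [hjk,
      Finset.sum_Icc_succ_top (by omega : 1 ≤ j+1) (fun l => cc l • ff (j+k+1-l)),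
      Finset.sum_Icc_succ_top (by omega : 1 ≤ j+1) (fun l => cc (k+l) • ff (j+1-l))]
    have h2 : j+k+1-(j+1) = k := by omega
    have h3 : j+1-(j+1) = 0 := by omega
    have h4 : k+(j+1) = j+k+1 := by omega
    rw [h2, h3, h4, ff_zero]
    simp only [smul_eq_C_mul, mul_one]
    rw [const_sum]
    ring

end DescAux


/-- Let `fₙ(x) = Σ_{j=0}^n ((2n-1)‼/((2j-1)‼(n-j)!)) x^{2j}` in `ℚ[x]`.  Then for all
`k ≥ j ≥ 1` (with conventions `(-1)‼ = 1`, `(-3)‼ = -1`, so `(2l-3)‼` for `l ≥ 1` and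
`(2(k+l)-3)‼` for `k+l ≥ 2` are given by the usual double factorials):
`fⱼ fₖ = f_{j+k} - Σ_{l=1}^j ((2l-3)‼/l!) f_{j+k-l} + Σ_{l=1}^j ((2(k+l)-3)‼/(k+l)!) f_{j-l}`. -/
theorem descendant_algebra_structure_constants :
    let f : ℕ → Polynomial ℚ := fun n =>
      ∑ j ∈ Finset.range (n + 1),
        (((2 * n - 1)‼ : ℚ) / (((2 * j - 1)‼ : ℚ) * ((n - j)! : ℚ))) • Polynomial.X ^ (2 * j)
    ∀ j k : ℕ, 1 ≤ j → j ≤ k →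
      f j * f k =
        f (j + k)
          - ∑ l ∈ Finset.Icc 1 j, (((2 * l - 3)‼ : ℚ) / (l ! : ℚ)) • f (j + k - l)
          + ∑ l ∈ Finset.Icc 1 j,
              (((2 * (k + l) - 3)‼ : ℚ) / ((k + l)! : ℚ)) • f (j - l) := by
  intro f j k hj hjk
  exact DescAux.main j k
end

section
/- The generating function identity Σ_{n≥0} t^n σ_n(φ_0) = e^{u_0 t}(1 + √(π x^2 t/2) · e^{x^2 t/2} · erf(√(x^2 t/2))) holds, where σ_n(φ_0) = Σ_{j=0}^n x^{2j} u_0^{n-j}/((2j-1)!!(n-j)!); equivalently, as formal power series, Σ_{n≥0} t^n σ_n(φ_0) = e^{u_0 t} · Σ_{j≥0} x^{2j} t^j/(2j-1)!!. -/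
open Polynomial PowerSeries Nat

/-- Generating function identity
`Σ_{n≥0} tⁿ σₙ(φ₀) = e^{u₀t}(1 + √(πx²t/2)·e^{x²t/2}·erf(√(x²t/2)))`, equivalently, as
formal power series in `t` with coefficients in `ℚ[x][u₀]`:
`Σ_{n≥0} tⁿ σₙ(φ₀) = e^{u₀t} · Σ_{j≥0} x^{2j} tʲ/(2j-1)‼`,
where `σₙ(φ₀) = Σ_{j=0}^n x^{2j} u₀^{n-j}/((2j-1)‼(n-j)!)`. -/
theorem descendant_generating_function :
    let A := Polynomial (Polynomial ℚ)
    let σ : ℕ → A := fun n =>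
      ∑ j ∈ Finset.range (n + 1),
        ((1 : ℚ) / (((2 * j - 1)‼ : ℚ) * ((n - j)! : ℚ))) •
          (Polynomial.C (Polynomial.X ^ (2 * j)) * Polynomial.X ^ (n - j))
    PowerSeries.mk σ =
      (PowerSeries.mk fun n => ((1 : ℚ) / (n ! : ℚ)) • (Polynomial.X : A) ^ n) *
        (PowerSeries.mk fun j =>
          ((1 : ℚ) / ((2 * j - 1)‼ : ℚ)) • (Polynomial.C (Polynomial.X ^ (2 * j)) : A)) := by
  intro A σ
  refine PowerSeries.ext fun n => ?_
  rw [PowerSeries.coeff_mul]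
  simp only [coeff_mk]
  rw [Finset.Nat.sum_antidiagonal_eq_sum_range_succ_mk]
  show (∑ j ∈ Finset.range (n + 1),
        ((1 : ℚ) / (((2 * j - 1)‼ : ℚ) * ((n - j)! : ℚ))) •
          (Polynomial.C (Polynomial.X ^ (2 * j)) * Polynomial.X ^ (n - j)) : A) = _
  rw [← Finset.sum_range_reflect]
  refine Finset.sum_congr rfl fun j hj => ?_
  have hjn : j ≤ n := Nat.lt_succ_iff.mp (Finset.mem_range.mp hj)
  simp only [Nat.add_sub_cancel]
  rw [Nat.sub_sub_self hjn, smul_mul_smul_comm]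
  rw [mul_comm (Polynomial.X ^ j)]
  congr 1
  field_simp
end

section
/- For the connection ∇^λ_{∂/∂t_i} φ_k := ∂_{t_i} φ_k + λ φ_i · φ_k on fields φ_k in a commutative algebra, the flatness relation ∇^λ_{∂/∂t_i} ∇^λ_{∂/∂t_j} φ_k = ∇^λ_{∂/∂t_j} ∇^λ_{∂/∂t_i} φ_k holds for all i, j, k and all scalars λ. -/
/-- For the connection `∇^λ_{∂/∂tᵢ} φₖ := ∂_{tᵢ} φₖ + λ φᵢ·φₖ` on fields `φₖ` in a
commutative algebra `A` (with commuting derivations `D i = ∂_{tᵢ}` and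
`∂_{tᵢ} φⱼ = ∂_{tⱼ} φᵢ`, as holds for `φᵢ = ∂W/∂uᵢ`), the flatness relation
`∇^λ_i ∇^λ_j φₖ = ∇^λ_j ∇^λ_i φₖ` holds for all `i, j, k` and all scalars `λ`. -/
theorem flat_connection_family (R : Type*) (A : Type*) [CommRing R] [CommRing A]
    [Algebra R A] (D : ℕ → Derivation R A A) (φ : ℕ → A)
    (hcomm : ∀ i j a, D i (D j a) = D j (D i a))
    (hsym : ∀ i j, D i (φ j) = D j (φ i)) (lam : R) :
    let nabla : ℕ → A → A := fun i a => D i a + lam • (φ i * a)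
    ∀ i j k, nabla i (nabla j (φ k)) = nabla j (nabla i (φ k)) := by
  intro nabla i j k
  simp only [nabla, map_add, Derivation.map_smul, map_smul, Derivation.leibniz, smul_add,
    mul_add, smul_smul, smul_eq_mul, Algebra.smul_def]
  rw [hcomm i j, hsym i j, hsym i k, hsym j k]
  simp [Derivation.map_algebraMap]
  ring
end

section
/- For normally ordered powers of the field x̂(z), the identity :x̂(z)^m: ⊙ :x̂(z)^n: = Σ_{j=0}^{min(m,n)} (j!/(4z²)^j) binom(m,j) binom(n,j) :x̂(z)^{m+n-2j}: implies x̂(z)^{⊙m} ⊙ x̂(z)^{⊙n} = x̂(z)^{⊙(m+n)} for all m, n ≥ 1; in particular the regularized product ⊙ is associative. -/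
open Finset Nat Polynomial

private def Tq (n j : ℕ) : ℚ := (n ! : ℚ) / ((2 : ℚ) ^ j * (j ! : ℚ) * ((n - 2 * j)! : ℚ))

private def Tg (n j : ℕ) : ℚ := if 2 * j ≤ n then Tq n j else 0

private lemma sum_fiber_eq {M : Type*} [AddCommMonoid M] (K k : ℕ) (hkK : k ≤ K)
    (f : ℕ → ℕ → ℕ → M) :
    ∑ p ∈ ((range (K+1) ×ˢ range (K+1)) ×ˢ range (K+1)).filter
        (fun p => p.1.1 + p.1.2 + p.2 = k), f p.1.1 p.1.2 p.2
      = ∑ a ∈ range (k + 1), ∑ j ∈ range (k - a + 1), f a (k - a - j) j := by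
  rw [Finset.sum_sigma']
  refine Finset.sum_nbij' (fun p => ⟨p.1.1, p.2⟩) (fun x => ((x.1, k - x.1 - x.2), x.2))
    ?_ ?_ ?_ ?_ ?_
  · rintro ⟨⟨a, b⟩, j⟩ hp
    simp only [mem_filter, mem_product, mem_range] at hp
    simp only [mem_sigma, mem_range]
    omega
  · rintro ⟨a, j⟩ hx
    simp only [mem_sigma, mem_range] at hx
    simp only [mem_filter, mem_product, mem_range]
    omega
  · rintro ⟨⟨a, b⟩, j⟩ hp
    simp only [mem_filter, mem_product, mem_range] at hp
    simp only [Prod.mk.injEq]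
    exact ⟨⟨trivial, by omega⟩, trivial⟩
  · rintro ⟨a, j⟩ hx
    rfl
  · rintro ⟨⟨a, b⟩, j⟩ hp
    simp only [mem_filter, mem_product, mem_range] at hp
    have : b = k - a - j := by omega
    rw [this]

private lemma poly_id (m n k : ℕ) (hk : 2 * k ≤ m + n) :
    ((m + n).choose m : ℚ) =
      ∑ a ∈ range (k + 1), ∑ j ∈ range (k - a + 1),
        ((k.choose a : ℚ) * ((k - a).choose j : ℚ) * 2 ^ j) *
          (if 2 * a + j ≤ m then (((m + n - 2 * k).choose (m - (2 * a + j))) : ℚ) else 0) := by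
  have hX : ((X + 1 : ℚ[X]) ^ (m + n)) =
      ∑ a ∈ range (k + 1), ∑ j ∈ range (k - a + 1),
        C ((k.choose a : ℚ) * ((k - a).choose j : ℚ) * 2 ^ j) *
          ((X + 1) ^ (m + n - 2 * k) * X ^ (2 * a + j)) := by
    have h1 : (X + 1 : ℚ[X]) ^ (m + n) = (X ^ 2 + (2 * X + 1)) ^ k * (X + 1) ^ (m + n - 2 * k) := by
      have : (X ^ 2 + (2 * X + 1) : ℚ[X]) = (X + 1) ^ 2 := by ring
      rw [this, ← pow_mul, ← pow_add]
      congr 1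
      omega
    rw [h1, add_pow]
    simp only [Finset.sum_mul, Finset.mul_sum]
    refine Finset.sum_congr rfl fun a ha => ?_
    rw [add_pow]
    simp only [Finset.sum_mul, Finset.mul_sum]
    refine Finset.sum_congr rfl fun j hj => ?_
    simp only [map_mul, map_pow, C_eq_natCast, map_ofNat]
    ring
  have hc := congrArg (fun p : ℚ[X] => p.coeff m) hX
  simp only [coeff_X_add_one_pow, finset_sum_coeff, coeff_C_mul, coeff_mul_X_pow',
    coeff_X_add_one_pow] at hc
  exact hc

private lemma core (m n k : ℕ) (hk : 2 * k ≤ m + n) :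
    ∑ a ∈ range (k + 1), ∑ j ∈ range (k - a + 1),
      Tg m a * Tg n (k - a - j) *
        ((j ! : ℚ) * ((m - 2 * a).choose j : ℚ) * ((n - 2 * (k - a - j)).choose j : ℚ))
      = Tq (m + n) k := by
  have hfac : ∀ r : ℕ, ((r ! : ℚ)) ≠ 0 := fun r => Nat.cast_ne_zero.mpr (Nat.factorial_ne_zero r)
  have h2 : (2 : ℚ) ≠ 0 := two_ne_zero
  have hterm : ∀ a ∈ range (k + 1), ∀ j ∈ range (k - a + 1),
      Tg m a * Tg n (k - a - j) *
        ((j ! : ℚ) * ((m - 2 * a).choose j : ℚ) * ((n - 2 * (k - a - j)).choose j : ℚ))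
      = ((m ! : ℚ) * (n ! : ℚ) / ((2 : ℚ) ^ k * (k ! : ℚ) * ((m + n - 2 * k)! : ℚ))) *
        (((k.choose a : ℚ) * ((k - a).choose j : ℚ) * 2 ^ j) *
          (if 2 * a + j ≤ m then (((m + n - 2 * k).choose (m - (2 * a + j))) : ℚ) else 0)) := by
    intro a ha j hj
    simp only [mem_range] at ha hj
    set b := k - a - j with hb
    have hab : a + b + j = k := by omega
    by_cases h1 : 2 * a ≤ m
    · by_cases hg2 : j ≤ m - 2 * a
      · have hm' : 2 * a + j ≤ m := by omega
        by_cases h3 : 2 * b ≤ n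
        · by_cases h4 : j ≤ n - 2 * b
          · -- main case
            have hn' : 2 * b + j ≤ n := by omega
            rw [if_pos hm']
            rw [Tg, if_pos h1, Tg, if_pos h3]
            rw [Nat.cast_choose ℚ hg2, Nat.cast_choose ℚ h4,
                Nat.cast_choose ℚ (show a ≤ k by omega),
                Nat.cast_choose ℚ (show j ≤ k - a by omega),
                Nat.cast_choose ℚ (show m - (2 * a + j) ≤ m + n - 2 * k by omega)]
            have e1 : m - (2 * a + j) = m - 2 * a - j := by omega
            have e2 : k - a - j = b := by omega
            have e3 : m + n - 2 * k - (m - 2 * a - j) = n - 2 * b - j := by omega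
            have e4 : k - (k - a) = a := by omega
            rw [e1, e2, e3]
            have h2k : (2 : ℚ) ^ k = 2 ^ a * 2 ^ b * 2 ^ j := by
              rw [← pow_add, ← pow_add]; congr 1; omega
            rw [Tq, Tq, h2k]
            field_simp
          · -- C(n-2b, j) = 0 and RHS choose vanishes
            rw [Nat.choose_eq_zero_of_lt (show n - 2 * b < j by omega), if_pos hm',
              Nat.choose_eq_zero_of_lt (show m + n - 2 * k < m - (2 * a + j) by omega)]
            simp
        · -- Tg n b = 0
          have hz : Tg n b = 0 := by rw [Tg, if_neg h3]
          rw [hz, if_pos hm',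
            Nat.choose_eq_zero_of_lt (show m + n - 2 * k < m - (2 * a + j) by omega)]
          simp
      · rw [Nat.choose_eq_zero_of_lt (show m - 2 * a < j by omega),
          if_neg (show ¬ 2 * a + j ≤ m by omega)]
        simp
    · rw [Tg, if_neg h1, if_neg (show ¬ 2 * a + j ≤ m by omega)]
      simp
  calc ∑ a ∈ range (k + 1), ∑ j ∈ range (k - a + 1),
      Tg m a * Tg n (k - a - j) *
        ((j ! : ℚ) * ((m - 2 * a).choose j : ℚ) * ((n - 2 * (k - a - j)).choose j : ℚ))
      = ∑ a ∈ range (k + 1), ∑ j ∈ range (k - a + 1),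
        ((m ! : ℚ) * (n ! : ℚ) / ((2 : ℚ) ^ k * (k ! : ℚ) * ((m + n - 2 * k)! : ℚ))) *
        (((k.choose a : ℚ) * ((k - a).choose j : ℚ) * 2 ^ j) *
          (if 2 * a + j ≤ m then (((m + n - 2 * k).choose (m - (2 * a + j))) : ℚ) else 0)) := by
        refine Finset.sum_congr rfl fun a ha => Finset.sum_congr rfl fun j hj => ?_
        exact hterm a ha j hj
    _ = ((m ! : ℚ) * (n ! : ℚ) / ((2 : ℚ) ^ k * (k ! : ℚ) * ((m + n - 2 * k)! : ℚ))) *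
        ((m + n).choose m : ℚ) := by
        simp only [← Finset.mul_sum]
        congr 1
        rw [← poly_id m n k hk]
    _ = Tq (m + n) k := by
        rw [Nat.cast_choose ℚ (Nat.le_add_right m n), Tq]
        have e : m + n - m = n := by omega
        rw [e]
        have hfac2 : ∀ r : ℕ, ((r ! : ℚ)) ≠ 0 := hfac
        field_simp

private lemma guard_zero (m n a b j : ℕ)
    (h : ¬(2 * a ≤ m ∧ j ≤ m - 2 * a ∧ 2 * b ≤ n ∧ j ≤ n - 2 * b)) :
    Tg m a * Tg n b * ((j ! : ℚ) * ((m - 2 * a).choose j : ℚ) * ((n - 2 * b).choose j : ℚ)) = 0 := by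
  by_cases h1 : 2 * a ≤ m
  · by_cases h2 : j ≤ m - 2 * a
    · by_cases h3 : 2 * b ≤ n
      · by_cases h4 : j ≤ n - 2 * b
        · exact absurd ⟨h1, h2, h3, h4⟩ h
        · rw [Nat.choose_eq_zero_of_lt (show n - 2 * b < j by omega)]; simp
      · have : Tg n b = 0 := by rw [Tg, if_neg h3]
        rw [this]; ring
    · rw [Nat.choose_eq_zero_of_lt (show m - 2 * a < j by omega)]; simp
  · have : Tg m a = 0 := by rw [Tg, if_neg h1]
    rw [this]; ring

private lemma main_eq {A : Type*} [AddCommGroup A] [Module ℚ A]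
    (odot : A →ₗ[ℚ] A →ₗ[ℚ] A) (c : ℚ) (N : ℕ → A)
    (hWick : ∀ m n : ℕ, odot (N m) (N n) =
      ∑ j ∈ Finset.range (min m n + 1),
        (((j ! : ℚ) * c ^ j) * (Nat.choose m j : ℚ) * (Nat.choose n j : ℚ)) •
          N (m + n - 2 * j)) (m n : ℕ) :
    odot (∑ j ∈ range (m / 2 + 1), (Tq m j * c ^ j) • N (m - 2 * j))
        (∑ j ∈ range (n / 2 + 1), (Tq n j * c ^ j) • N (n - 2 * j))
      = ∑ j ∈ range ((m + n) / 2 + 1), (Tq (m + n) j * c ^ j) • N (m + n - 2 * j) := by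
  have expand : odot (∑ j ∈ range (m / 2 + 1), (Tq m j * c ^ j) • N (m - 2 * j))
        (∑ j ∈ range (n / 2 + 1), (Tq n j * c ^ j) • N (n - 2 * j))
      = ∑ a ∈ range (m / 2 + 1), ∑ b ∈ range (n / 2 + 1),
          ∑ j ∈ range (min (m - 2 * a) (n - 2 * b) + 1),
            (Tq n b * c ^ b *
              (Tq m a * c ^ a *
                ((j ! : ℚ) * c ^ j * ((m - 2 * a).choose j : ℚ) * ((n - 2 * b).choose j : ℚ)))) •
              N (m - 2 * a + (n - 2 * b) - 2 * j) := by
    simp only [map_sum, map_smul, LinearMap.sum_apply, LinearMap.smul_apply, hWick,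
      Finset.smul_sum, smul_smul]
    rw [Finset.sum_comm]
  rw [expand]
  -- Step 2: replace Tq by Tg and extend ranges to the cube [0, m+n]³
  set K := m + n with hK
  have step2 : ∑ a ∈ range (m / 2 + 1), ∑ b ∈ range (n / 2 + 1),
          ∑ j ∈ range (min (m - 2 * a) (n - 2 * b) + 1),
            (Tq n b * c ^ b *
              (Tq m a * c ^ a *
                ((j ! : ℚ) * c ^ j * ((m - 2 * a).choose j : ℚ) * ((n - 2 * b).choose j : ℚ)))) •
              N (m - 2 * a + (n - 2 * b) - 2 * j)
      = ∑ a ∈ range (K + 1), ∑ b ∈ range (K + 1), ∑ j ∈ range (K + 1),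
            (Tg n b * c ^ b *
              (Tg m a * c ^ a *
                ((j ! : ℚ) * c ^ j * ((m - 2 * a).choose j : ℚ) * ((n - 2 * b).choose j : ℚ)))) •
              N (m - 2 * a + (n - 2 * b) - 2 * j) := by
    have inner : ∀ a b : ℕ, 2 * a ≤ m → 2 * b ≤ n →
        ∑ j ∈ range (min (m - 2 * a) (n - 2 * b) + 1),
            (Tq n b * c ^ b *
              (Tq m a * c ^ a *
                ((j ! : ℚ) * c ^ j * ((m - 2 * a).choose j : ℚ) * ((n - 2 * b).choose j : ℚ)))) •
              N (m - 2 * a + (n - 2 * b) - 2 * j)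
          = ∑ j ∈ range (K + 1),
            (Tg n b * c ^ b *
              (Tg m a * c ^ a *
                ((j ! : ℚ) * c ^ j * ((m - 2 * a).choose j : ℚ) * ((n - 2 * b).choose j : ℚ)))) •
              N (m - 2 * a + (n - 2 * b) - 2 * j) := by
      intro a b hba hbb
      have hTa : Tg m a = Tq m a := by rw [Tg, if_pos hba]
      have hTb : Tg n b = Tq n b := by rw [Tg, if_pos hbb]
      rw [hTa, hTb]
      refine Finset.sum_subset ?_ ?_
      · intro x hx
        simp only [mem_range] at *
        omega
      · intro j hj hnj
        simp only [mem_range, not_lt] at hnj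
        rcases (show m - 2 * a < j ∨ n - 2 * b < j by omega) with h | h
        · rw [Nat.choose_eq_zero_of_lt h]; simp
        · rw [Nat.choose_eq_zero_of_lt h]; simp
    calc ∑ a ∈ range (m / 2 + 1), ∑ b ∈ range (n / 2 + 1),
          ∑ j ∈ range (min (m - 2 * a) (n - 2 * b) + 1),
            (Tq n b * c ^ b *
              (Tq m a * c ^ a *
                ((j ! : ℚ) * c ^ j * ((m - 2 * a).choose j : ℚ) * ((n - 2 * b).choose j : ℚ)))) •
              N (m - 2 * a + (n - 2 * b) - 2 * j)
        = ∑ a ∈ range (m / 2 + 1), ∑ b ∈ range (n / 2 + 1), ∑ j ∈ range (K + 1),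
            (Tg n b * c ^ b *
              (Tg m a * c ^ a *
                ((j ! : ℚ) * c ^ j * ((m - 2 * a).choose j : ℚ) * ((n - 2 * b).choose j : ℚ)))) •
              N (m - 2 * a + (n - 2 * b) - 2 * j) := by
          refine Finset.sum_congr rfl fun a ha => Finset.sum_congr rfl fun b hb => ?_
          simp only [mem_range] at ha hb
          exact inner a b (by omega) (by omega)
      _ = ∑ a ∈ range (m / 2 + 1), ∑ b ∈ range (K + 1), ∑ j ∈ range (K + 1),
            (Tg n b * c ^ b *
              (Tg m a * c ^ a *
                ((j ! : ℚ) * c ^ j * ((m - 2 * a).choose j : ℚ) * ((n - 2 * b).choose j : ℚ)))) •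
              N (m - 2 * a + (n - 2 * b) - 2 * j) := by
          refine Finset.sum_congr rfl fun a ha => ?_
          refine Finset.sum_subset ?_ ?_
          · intro x hx
            simp only [mem_range] at *
            omega
          · intro b hb hnb
            simp only [mem_range, not_lt] at hnb
            have : Tg n b = 0 := by rw [Tg, if_neg (by omega)]
            simp [this]
      _ = ∑ a ∈ range (K + 1), ∑ b ∈ range (K + 1), ∑ j ∈ range (K + 1),
            (Tg n b * c ^ b *
              (Tg m a * c ^ a *
                ((j ! : ℚ) * c ^ j * ((m - 2 * a).choose j : ℚ) * ((n - 2 * b).choose j : ℚ)))) •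
              N (m - 2 * a + (n - 2 * b) - 2 * j) := by
          refine Finset.sum_subset ?_ ?_
          · intro x hx
            simp only [mem_range] at *
            omega
          · intro a ha hna
            simp only [mem_range, not_lt] at hna
            have : Tg m a = 0 := by rw [Tg, if_neg (by omega)]
            simp [this]
  rw [step2]
  have cube : ∑ a ∈ range (K + 1), ∑ b ∈ range (K + 1), ∑ j ∈ range (K + 1),
            (Tg n b * c ^ b *
              (Tg m a * c ^ a *
                ((j ! : ℚ) * c ^ j * ((m - 2 * a).choose j : ℚ) * ((n - 2 * b).choose j : ℚ)))) •
              N (m - 2 * a + (n - 2 * b) - 2 * j)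
      = ∑ p ∈ (range (K + 1) ×ˢ range (K + 1)) ×ˢ range (K + 1),
            (Tg n p.1.2 * c ^ p.1.2 *
              (Tg m p.1.1 * c ^ p.1.1 *
                ((p.2 ! : ℚ) * c ^ p.2 * ((m - 2 * p.1.1).choose p.2 : ℚ) *
                  ((n - 2 * p.1.2).choose p.2 : ℚ)))) •
              N (m - 2 * p.1.1 + (n - 2 * p.1.2) - 2 * p.2) := by
    rw [Finset.sum_product, Finset.sum_product]
  rw [cube]
  have hmaps : ∀ p ∈ (range (K + 1) ×ˢ range (K + 1)) ×ˢ range (K + 1),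
      p.1.1 + p.1.2 + p.2 ∈ range (3 * K + 1) := by
    intro p hp
    simp only [mem_product, mem_range] at hp ⊢
    omega
  rw [← Finset.sum_fiberwise_of_maps_to hmaps]
  have step3 : ∀ k : ℕ,
      ∑ p ∈ ((range (K + 1) ×ˢ range (K + 1)) ×ˢ range (K + 1)).filter
          (fun p => p.1.1 + p.1.2 + p.2 = k),
            (Tg n p.1.2 * c ^ p.1.2 *
              (Tg m p.1.1 * c ^ p.1.1 *
                ((p.2 ! : ℚ) * c ^ p.2 * ((m - 2 * p.1.1).choose p.2 : ℚ) *
                  ((n - 2 * p.1.2).choose p.2 : ℚ)))) •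
              N (m - 2 * p.1.1 + (n - 2 * p.1.2) - 2 * p.2)
      = ((∑ p ∈ ((range (K + 1) ×ˢ range (K + 1)) ×ˢ range (K + 1)).filter
          (fun p => p.1.1 + p.1.2 + p.2 = k),
            Tg m p.1.1 * Tg n p.1.2 *
              ((p.2 ! : ℚ) * ((m - 2 * p.1.1).choose p.2 : ℚ) *
                ((n - 2 * p.1.2).choose p.2 : ℚ))) * c ^ k) • N (m + n - 2 * k) := by
    intro k
    rw [Finset.sum_mul, Finset.sum_smul]
    refine Finset.sum_congr rfl fun p hp => ?_
    obtain ⟨⟨a, b⟩, j⟩ := p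
    simp only [mem_filter, mem_product, mem_range] at hp
    obtain ⟨⟨⟨ha, hb⟩, hj⟩, hsum⟩ := hp
    by_cases hg : 2 * a ≤ m ∧ j ≤ m - 2 * a ∧ 2 * b ≤ n ∧ j ≤ n - 2 * b
    · obtain ⟨g1, g2, g3, g4⟩ := hg
      have hidx : m - 2 * a + (n - 2 * b) - 2 * j = m + n - 2 * k := by omega
      rw [hidx]
      congr 1
      have hck : c ^ k = c ^ a * c ^ b * c ^ j := by
        rw [← pow_add, ← pow_add]; congr 1; omega
      rw [hck]; ring
    · have h0 := guard_zero m n a b j hg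
      have e1 : Tg n b * c ^ b *
            (Tg m a * c ^ a *
              ((j ! : ℚ) * c ^ j * ((m - 2 * a).choose j : ℚ) * ((n - 2 * b).choose j : ℚ)))
          = (Tg m a * Tg n b *
              ((j ! : ℚ) * ((m - 2 * a).choose j : ℚ) * ((n - 2 * b).choose j : ℚ))) *
            (c ^ a * c ^ b * c ^ j) := by ring
      rw [e1, h0, zero_mul, zero_mul, zero_smul, zero_smul]
  refine (Finset.sum_congr rfl fun k _ => step3 k).trans ?_
  rw [← Finset.sum_subset (show range ((m + n) / 2 + 1) ⊆ range (3 * K + 1) by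
      intro x hx; simp only [mem_range] at *; omega) ?_]
  · refine Finset.sum_congr rfl fun k hk => ?_
    simp only [mem_range] at hk
    have h2k : 2 * k ≤ m + n := by omega
    rw [sum_fiber_eq K k (by omega)
        (fun a b j => Tg m a * Tg n b *
          ((j ! : ℚ) * ((m - 2 * a).choose j : ℚ) * ((n - 2 * b).choose j : ℚ))),
      core m n k h2k]
  · intro k hk hnk
    simp only [mem_range, not_lt] at hk hnk
    have hS : ∑ p ∈ ((range (K + 1) ×ˢ range (K + 1)) ×ˢ range (K + 1)).filter
          (fun p => p.1.1 + p.1.2 + p.2 = k),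
            Tg m p.1.1 * Tg n p.1.2 *
              ((p.2 ! : ℚ) * ((m - 2 * p.1.1).choose p.2 : ℚ) *
                ((n - 2 * p.1.2).choose p.2 : ℚ)) = 0 := by
      refine Finset.sum_eq_zero fun p hp => ?_
      obtain ⟨⟨a, b⟩, j⟩ := p
      simp only [mem_filter, mem_product, mem_range] at hp
      refine guard_zero m n a b j ?_
      rintro ⟨g1, g2, g3, g4⟩
      omega
    rw [hS, zero_mul, zero_smul]

/-- In the quantization of the Airy curve, the Wick identity
`:x̂(z)ᵐ: ⊙ :x̂(z)ⁿ: = Σ_{j=0}^{min(m,n)} (j!/(4z²)ʲ) binom(m,j) binom(n,j) :x̂(z)^{m+n-2j}:`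
implies `x̂(z)^{⊙m} ⊙ x̂(z)^{⊙n} = x̂(z)^{⊙(m+n)}` for all `m, n ≥ 1`; in particular
the regularized product `⊙` is associative on the regularized powers.
Algebraically: `A` is a ℚ-module with a bilinear product `⊙`, `N n` stands for `:x̂(z)ⁿ:`,
`c` for `(4z²)⁻¹`, and `R n = x̂(z)^{⊙n} = Σ_j T(n,j) cʲ N(n-2j)` with
`T(n,j) = n!/(2ʲ j!(n-2j)!)`. -/
theorem regularized_product_homomorphism (A : Type*) [AddCommGroup A] [Module ℚ A]
    (odot : A →ₗ[ℚ] A →ₗ[ℚ] A) (c : ℚ) (N : ℕ → A)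
    (hWick : ∀ m n : ℕ, odot (N m) (N n) =
      ∑ j ∈ Finset.range (min m n + 1),
        (((j ! : ℚ) * c ^ j) * (Nat.choose m j : ℚ) * (Nat.choose n j : ℚ)) •
          N (m + n - 2 * j)) :
    let T : ℕ → ℕ → ℚ := fun n j => (n ! : ℚ) / ((2 : ℚ) ^ j * (j ! : ℚ) * ((n - 2 * j)! : ℚ))
    let R : ℕ → A := fun n =>
      ∑ j ∈ Finset.range (n / 2 + 1), (T n j * c ^ j) • N (n - 2 * j)
    (∀ m n : ℕ, 1 ≤ m → 1 ≤ n → odot (R m) (R n) = R (m + n)) ∧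
    (∀ l m n : ℕ, 1 ≤ l → 1 ≤ m → 1 ≤ n →
      odot (odot (R l) (R m)) (R n) = odot (R l) (odot (R m) (R n))) := by
  intro T R
  have hR : ∀ q : ℕ, R q = ∑ j ∈ Finset.range (q / 2 + 1), (Tq q j * c ^ j) • N (q - 2 * j) :=
    fun q => rfl
  constructor
  · intro m n _ _
    rw [hR, hR, hR]
    exact main_eq odot c N hWick m n
  · intro l m n _ _ _
    rw [hR l, hR m, hR n, main_eq odot c N hWick l m, main_eq odot c N hWick m n,
      main_eq odot c N hWick (l + m) n, main_eq odot c N hWick l (m + n), add_assoc]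
end
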